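/- arXiv:1004.4512 — 10 statements merged into one kernel-verified Lean document; each statement's English description precedes it below -/
import Mathlib

section
/- The Fuss-Catalan number (1/(n+1))·binom((n+1)(m+1), n) is a positive integer for all positive integers n and m; i.e., (n+1) divides binom((n+1)(m+1), n). -/
/-- The Fuss-Catalan number `(1/(n+1)) * binom((n+1)(m+1), n)` is a positive integer:
`n+1` divides the binomial coefficient, and the quotient is positive. -/
theorem fussCatalan_pos_integer (n m : ℕ) (hn : 0 < n) (hm : 0 < m) :
    (n + 1) ∣ Nat.choose ((n + 1) * (m + 1)) n ∧
      0 < Nat.choose ((n + 1) * (m + 1)) n / (n + 1) := by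
  set N := (n + 1) * (m + 1) with hN
  have hNn : n ≤ N := by
    calc n ≤ n + 1 := Nat.le_succ n
    _ ≤ (n + 1) * (m + 1) := Nat.le_mul_of_pos_right _ (Nat.succ_pos m)
  have hkey : N * Nat.choose (N - 1) (n - 1) = Nat.choose N n * n := by
    have h := Nat.add_one_mul_choose_eq (N - 1) (n - 1)
    have hN1 : N - 1 + 1 = N := by omega
    have hn1 : n - 1 + 1 = n := by omega
    rw [hN1, hn1] at h
    exact h
  have hdvdN : (n + 1) ∣ N := Dvd.intro _ rfl
  have hdvd : (n + 1) ∣ Nat.choose N n * n := hkey ▸ hdvdN.mul_right _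
  have hcop : Nat.Coprime (n + 1) n := (by simp)
  have hdiv : (n + 1) ∣ Nat.choose N n := hcop.dvd_of_dvd_mul_right hdvd
  refine ⟨hdiv, Nat.div_pos (Nat.le_of_dvd (Nat.choose_pos hNn) hdiv) (Nat.succ_pos n)⟩
end

section
/- Every (m+2)-angulation of an (nm+2)-gon consists of exactly n-1 m-diagonals. -/
/-- A chord of the `(nm+2)`-gon (vertices labeled `1,…,nm+2` clockwise) is recorded as a
pair `(i, j)` with `i < j`. It is an *m-diagonal* if it joins two non-adjacent boundary
vertices and divides the polygon into two parts whose numbers of sides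
(`j - i + 1` and `(nm+2) - (j - i) + 1`) are both congruent to `2` modulo `m`. -/
def IsMDiagonal (n m : ℕ) (c : ℕ × ℕ) : Prop :=
  1 ≤ c.1 ∧ c.1 < c.2 ∧ c.2 ≤ n * m + 2 ∧
    2 ≤ c.2 - c.1 ∧ c.2 - c.1 ≤ n * m ∧
    (c.2 - c.1 + 1) % m = 2 % m ∧ ((n * m + 2) - (c.2 - c.1) + 1) % m = 2 % m

/-- Two chords cross in the interior of the polygon. -/
def Crosses (a b : ℕ × ℕ) : Prop :=
  (a.1 < b.1 ∧ b.1 < a.2 ∧ a.2 < b.2) ∨ (b.1 < a.1 ∧ a.1 < b.2 ∧ b.2 < a.2)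

/-- An `(m+2)`-angulation of the `(nm+2)`-gon: a maximal set of pairwise non-crossing
m-diagonals. -/
def IsAngulation (n m : ℕ) (Δ : Finset (ℕ × ℕ)) : Prop :=
  (∀ c ∈ Δ, IsMDiagonal n m c) ∧
    (∀ a ∈ Δ, ∀ b ∈ Δ, ¬ Crosses a b) ∧
    (∀ c, IsMDiagonal n m c → c ∉ Δ → ∃ d ∈ Δ, Crosses c d)

/-- helper: cancel multiplication in a strict inequality -/
lemma lt_of_mul_lt' {a b c : ℕ} (h : a * c < b * c) : a < b := by
  by_contra h'
  exact absurd (Nat.mul_le_mul_right c (by omega : b ≤ a)) (by omega)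

/-- Every m-diagonal has span `k*m+1` with `1 ≤ k < n`. -/
lemma diag_span {n m : ℕ} (hm : 1 ≤ m) {c : ℕ × ℕ} (h : IsMDiagonal n m c) :
    ∃ k, 1 ≤ k ∧ k + 1 ≤ n ∧ c.2 - c.1 = k * m + 1 := by
  obtain ⟨h1, h2, h3, h4, h5, h6, h7⟩ := h
  have hdvd : m ∣ (c.2 - c.1 + 1) - 2 := (Nat.modEq_iff_dvd' (by omega)).mp h6.symm
  obtain ⟨k, hk⟩ := hdvd
  have hk1 : 1 ≤ k := by
    rcases Nat.eq_zero_or_pos k with h0 | h0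
    · subst h0; simp at hk; omega
    · exact h0
  have hcm : m * k = k * m := Nat.mul_comm m k
  refine ⟨k, hk1, ?_, by omega⟩
  by_contra hle
  have : n * m ≤ k * m := Nat.mul_le_mul_right m (by omega)
  omega

/-- Build an m-diagonal from its span data. -/
lemma diag_mk {n m : ℕ} (hm : 1 ≤ m) {a b k : ℕ} (ha : 1 ≤ a) (hb : b ≤ n * m + 2)
    (hk : 1 ≤ k) (hk' : k + 1 ≤ n) (hs : b - a = k * m + 1) (hab : a < b) :
    IsMDiagonal n m (a, b) := by
  have hkm : 1 * 1 ≤ k * m := Nat.mul_le_mul hk hm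
  have h1 : (n - k) * m + k * m = n * m := by
    rw [← Nat.add_mul, Nat.sub_add_cancel (by omega : k ≤ n)]
  have h2 : 1 * m ≤ (n - k) * m := Nat.mul_le_mul_right m (by omega)
  have hc1 : m * k = k * m := Nat.mul_comm m k
  have hc2 : m * (n - k) = (n - k) * m := Nat.mul_comm m (n - k)
  refine ⟨ha, hab, hb, by omega, by omega, ?_, ?_⟩
  · have he : b - a + 1 = m * k + 2 := by omega
    rw [he]; exact Nat.mul_add_mod m k 2
  · have he : n * m + 2 - (b - a) + 1 = m * (n - k) + 2 := by omega
    rw [he]; exact Nat.mul_add_mod m (n - k) 2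

def collapseV (i m p : ℕ) : ℕ := if p ≤ i then p else p - m
def expandV (i m p : ℕ) : ℕ := if p ≤ i then p else p + m

lemma collapse_lt {i m p q : ℕ} (hp : p ≤ i ∨ i + m + 1 ≤ p) (hq : q ≤ i ∨ i + m + 1 ≤ q) :
    collapseV i m p < collapseV i m q ↔ p < q := by
  unfold collapseV; split_ifs <;> omega

lemma collapse_inj {i m p q : ℕ} (hp : p ≤ i ∨ i + m + 1 ≤ p) (hq : q ≤ i ∨ i + m + 1 ≤ q)
    (h : collapseV i m p = collapseV i m q) : p = q := by
  unfold collapseV at h; split_ifs at h <;> omega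

lemma crosses_collapse {i m e1 e2 f1 f2 : ℕ}
    (he1 : e1 ≤ i ∨ i + m + 1 ≤ e1) (he2 : e2 ≤ i ∨ i + m + 1 ≤ e2)
    (hf1 : f1 ≤ i ∨ i + m + 1 ≤ f1) (hf2 : f2 ≤ i ∨ i + m + 1 ≤ f2) :
    Crosses (collapseV i m e1, collapseV i m e2) (collapseV i m f1, collapseV i m f2)
      ↔ Crosses (e1, e2) (f1, f2) := by
  unfold Crosses
  dsimp only
  rw [collapse_lt he1 hf1, collapse_lt hf1 he2, collapse_lt he2 hf2,
      collapse_lt hf1 he1, collapse_lt he1 hf2, collapse_lt hf2 he2]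

lemma expand_diag {n m i : ℕ} (hm : 1 ≤ m) {a' b' : ℕ} (h : IsMDiagonal n m (a', b')) :
    IsMDiagonal (n + 1) m (expandV i m a', expandV i m b') := by
  obtain ⟨k, hk1, hk2, hks⟩ := diag_span hm h
  obtain ⟨h1, h2, h3, h4, h5, h6, h7⟩ := h
  dsimp only at *
  have hmul : (n + 1) * m = n * m + m := by ring
  have hsucc : (k + 1) * m = k * m + m := by ring
  unfold expandV
  split_ifs with ha hb hb
  · exact diag_mk hm h1 (by omega) hk1 (by omega) (by omega) (by omega)
  · exact diag_mk hm h1 (by omega) (show 1 ≤ k + 1 by omega) (by omega) (by omega) (by omega)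
  · omega
  · exact diag_mk hm (by omega) (by omega) hk1 (by omega) (by omega) (by omega)

theorem angulation_card_aux (m : ℕ) (hm : 1 ≤ m) :
    ∀ n, 1 ≤ n → ∀ Δ : Finset (ℕ × ℕ), IsAngulation n m Δ → Δ.card = n - 1 := by
  refine Nat.le_induction ?_ ?_
  · -- base case n = 1
    rintro Δ ⟨hdiag, -, -⟩
    have hΔe : Δ = ∅ := by
      refine Finset.eq_empty_of_forall_notMem fun c hc => ?_
      obtain ⟨k, hk1, hk2, -⟩ := diag_span hm (hdiag c hc)
      omega
    simp [hΔe]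
  · -- inductive step
    intro n hn IH Δ hΔ
    obtain ⟨hdiag, hcross, hmax⟩ := hΔ
    have hmul : (n + 1) * m = n * m + m := by ring
    -- Δ is nonempty
    have hne : Δ.Nonempty := by
      have hd0 : IsMDiagonal (n + 1) m (1, m + 2) :=
        diag_mk hm le_rfl (by omega) le_rfl (by omega) (by omega) (by omega)
      by_cases h0 : (1, m + 2) ∈ Δ
      · exact ⟨_, h0⟩
      · obtain ⟨d, hd, -⟩ := hmax _ hd0 h0; exact ⟨d, hd⟩
    obtain ⟨⟨i, j⟩, hijΔ, hmin⟩ := Finset.exists_min_image Δ (fun c => c.2 - c.1) hne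
    dsimp only at hmin
    obtain ⟨k, hk1, hk2, hks⟩ := diag_span hm (hdiag _ hijΔ)
    obtain ⟨hi1, hij, hj2, hs2, hsle, -, -⟩ := hdiag _ hijΔ
    dsimp only at hks hi1 hij hj2 hs2 hsle
    -- the minimal-span diagonal has span m+1
    have hk : k = 1 := by
      by_contra hk'
      have hkm2 : 2 * m ≤ k * m := Nat.mul_le_mul_right m (by omega)
      have hcd : IsMDiagonal (n + 1) m (i, i + m + 1) :=
        diag_mk hm hi1 (by omega) le_rfl (by omega) (by omega) (by omega)
      have hnotmem : (i, i + m + 1) ∉ Δ := by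
        intro hmem
        have := hmin _ hmem
        dsimp only at this
        omega
      obtain ⟨d, hdΔ, hcr⟩ := hmax _ hcd hnotmem
      have hmind := hmin _ hdΔ
      have hnc1 := hcross _ hijΔ _ hdΔ
      simp only [Crosses] at hcr hnc1
      omega
    subst hk
    have hj : j = i + m + 1 := by
      have h1m : 1 * m = m := one_mul m
      omega
    subst hj
    -- no diagonal of Δ has an endpoint strictly inside the ear
    have havoid : ∀ e ∈ Δ, (e.1 ≤ i ∨ i + m + 1 ≤ e.1) ∧ (e.2 ≤ i ∨ i + m + 1 ≤ e.2) := by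
      intro e heΔ
      have h1 := hmin _ heΔ
      have h2 := hcross _ hijΔ _ heΔ
      have h4 := (hdiag _ heΔ).2.1
      simp only [Crosses] at h2
      have h1m : 1 * m = m := one_mul m
      omega
    -- a straddling diagonal other than the ear has span ≥ 2m+1
    have hstraddle : ∀ e ∈ Δ, e ≠ (i, i + m + 1) → e.1 ≤ i → i + m + 1 ≤ e.2 →
        2 * m + 1 ≤ e.2 - e.1 := by
      intro e heΔ hne' h1 h2
      obtain ⟨k', hk'1, hk'2, hk's⟩ := diag_span hm (hdiag _ heΔ)
      rcases Nat.lt_or_ge k' 2 with hc | hc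
      · exfalso
        have hk'e : k' = 1 := by omega
        subst hk'e
        have h1m : 1 * m = m := one_mul m
        apply hne'
        have he1 : e.1 = i := by omega
        have he2 : e.2 = i + m + 1 := by omega
        exact Prod.ext he1 he2
      · have : 2 * m ≤ k' * m := Nat.mul_le_mul_right m hc
        omega
    -- the collapsed set
    set F : ℕ × ℕ → ℕ × ℕ := fun e => (collapseV i m e.1, collapseV i m e.2) with hF
    set Δ' : Finset (ℕ × ℕ) := (Δ.erase (i, i + m + 1)).image F with hΔ'
    have himg : ∀ e ∈ Δ.erase (i, i + m + 1), IsMDiagonal n m (F e) := by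
      intro e he
      rw [Finset.mem_erase] at he
      obtain ⟨hne', heΔ⟩ := he
      obtain ⟨hav1, hav2⟩ := havoid e heΔ
      obtain ⟨k', hk'1, hk'2, hk's⟩ := diag_span hm (hdiag _ heΔ)
      obtain ⟨ha1, hab, hb2, hesp, hesl, -, -⟩ := hdiag _ heΔ
      have hsucc : k' * m = (k' - 1) * m + m := by
        have h' : k' - 1 + 1 = k' := by omega
        calc k' * m = (k' - 1 + 1) * m := by rw [h']
          _ = (k' - 1) * m + m := by ring
      show IsMDiagonal n m (collapseV i m e.1, collapseV i m e.2)
      by_cases h1 : e.1 ≤ i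
      · by_cases h2 : e.2 ≤ i
        · have hc1 : collapseV i m e.1 = e.1 := by unfold collapseV; rw [if_pos h1]
          have hc2 : collapseV i m e.2 = e.2 := by unfold collapseV; rw [if_pos h2]
          rw [hc1, hc2]
          have hkm : k' * m < n * m := by omega
          have hlt := lt_of_mul_lt' hkm
          exact diag_mk hm ha1 (by omega) hk'1 (by omega) (by omega) (by omega)
        · have hc1 : collapseV i m e.1 = e.1 := by unfold collapseV; rw [if_pos h1]
          have hc2 : collapseV i m e.2 = e.2 - m := by unfold collapseV; rw [if_neg h2]
          rw [hc1, hc2]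
          have hib : i + m + 1 ≤ e.2 := by omega
          have hstr := hstraddle e heΔ hne' h1 hib
          have hkk : 1 * m < k' * m := by omega
          have hk'2' := lt_of_mul_lt' hkk
          exact diag_mk hm ha1 (by omega) (show 1 ≤ k' - 1 by omega) (by omega)
            (by omega) (by omega)
      · have h1' : i + m + 1 ≤ e.1 := by omega
        have h2 : ¬ e.2 ≤ i := by omega
        have hc1 : collapseV i m e.1 = e.1 - m := by unfold collapseV; rw [if_neg h1]
        have hc2 : collapseV i m e.2 = e.2 - m := by unfold collapseV; rw [if_neg h2]
        rw [hc1, hc2]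
        have hkm : k' * m < n * m := by omega
        have hlt := lt_of_mul_lt' hkm
        exact diag_mk hm (by omega) (by omega) hk'1 (by omega) (by omega) (by omega)
    have hang' : IsAngulation n m Δ' := by
      refine ⟨?_, ?_, ?_⟩
      · intro c hc
        rw [hΔ', Finset.mem_image] at hc
        obtain ⟨e, he, rfl⟩ := hc
        exact himg e he
      · intro a' ha' b' hb'
        rw [hΔ', Finset.mem_image] at ha' hb'
        obtain ⟨e, he, rfl⟩ := ha'
        obtain ⟨f, hf, rfl⟩ := hb'
        rw [Finset.mem_erase] at he hf
        obtain ⟨he1, he2⟩ := havoid e he.2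
        obtain ⟨hf1, hf2⟩ := havoid f hf.2
        show ¬ Crosses (collapseV i m e.1, collapseV i m e.2)
            (collapseV i m f.1, collapseV i m f.2)
        rw [crosses_collapse he1 he2 hf1 hf2]
        exact hcross _ he.2 _ hf.2
      · rintro ⟨a', b'⟩ hc hcmem
        have hs2' : 2 ≤ b' - a' := hc.2.2.2.1
        have haD : expandV i m a' ≤ i ∨ i + m + 1 ≤ expandV i m a' := by
          unfold expandV; split_ifs <;> omega
        have hbD : expandV i m b' ≤ i ∨ i + m + 1 ≤ expandV i m b' := by
          unfold expandV; split_ifs <;> omega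
        have hcolA : collapseV i m (expandV i m a') = a' := by
          unfold expandV collapseV; split_ifs <;> omega
        have hcolB : collapseV i m (expandV i m b') = b' := by
          unfold expandV collapseV; split_ifs <;> omega
        have hcdiag : IsMDiagonal (n + 1) m (expandV i m a', expandV i m b') :=
          expand_diag hm hc
        have hnotmem : (expandV i m a', expandV i m b') ∉ Δ := by
          intro hmem
          have hne2 : (expandV i m a', expandV i m b') ≠ (i, i + m + 1) := by
            intro hEq
            have hA : expandV i m a' = i := congrArg Prod.fst hEq
            have hB : expandV i m b' = i + m + 1 := congrArg Prod.snd hEq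
            rw [hA] at hcolA
            rw [hB] at hcolB
            unfold collapseV at hcolA hcolB
            split_ifs at hcolA hcolB <;> omega
          apply hcmem
          rw [hΔ', Finset.mem_image]
          refine ⟨_, Finset.mem_erase.mpr ⟨hne2, hmem⟩, ?_⟩
          show (collapseV i m (expandV i m a'), collapseV i m (expandV i m b')) = (a', b')
          rw [hcolA, hcolB]
        obtain ⟨d, hdΔ, hcr⟩ := hmax _ hcdiag hnotmem
        have hdne : d ≠ (i, i + m + 1) := by
          intro h
          subst h
          unfold Crosses at hcr
          dsimp only at hcr
          omega
        obtain ⟨hd1, hd2⟩ := havoid d hdΔ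
        refine ⟨F d, ?_, ?_⟩
        · rw [hΔ', Finset.mem_image]
          exact ⟨d, Finset.mem_erase.mpr ⟨hdne, hdΔ⟩, rfl⟩
        · show Crosses (a', b') (collapseV i m d.1, collapseV i m d.2)
          rw [← hcolA, ← hcolB, crosses_collapse haD hbD hd1 hd2]
          exact hcr
    have hcard' : Δ'.card = (Δ.erase (i, i + m + 1)).card := by
      rw [hΔ']
      apply Finset.card_image_of_injOn
      intro e he f hf hEq
      rw [Finset.mem_coe, Finset.mem_erase] at he hf
      obtain ⟨he1, he2⟩ := havoid e he.2
      obtain ⟨hf1, hf2⟩ := havoid f hf.2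
      have h1 : collapseV i m e.1 = collapseV i m f.1 := congrArg Prod.fst hEq
      have h2 : collapseV i m e.2 = collapseV i m f.2 := congrArg Prod.snd hEq
      exact Prod.ext (collapse_inj he1 hf1 h1) (collapse_inj he2 hf2 h2)
    have hIH := IH Δ' hang'
    have hcerase : (Δ.erase (i, i + m + 1)).card = Δ.card - 1 :=
      Finset.card_erase_of_mem hijΔ
    have hpos : 0 < Δ.card := Finset.card_pos.mpr hne
    omega

/-- Every `(m+2)`-angulation of an `(nm+2)`-gon consists of exactly `n-1` m-diagonals. -/
theorem angulation_card (n m : ℕ) (hn : 2 ≤ n) (hm : 1 ≤ m)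
    (Δ : Finset (ℕ × ℕ)) (hΔ : IsAngulation n m Δ) : Δ.card = n - 1 := by
  exact angulation_card_aux m hm n (by omega) Δ hΔ
end

section
/- The formal power series U(x) = Σ_{r≥1} (1/r)·binom(r(s-1), r-1)·x^r satisfies the functional equation U(x) = x·(1 + U(x))^{s-1}. -/
open PowerSeries

/-- Raney numbers `k/(mn+k) * C(mn+k, n)` as rationals. -/
def fcAux (m n k : ℕ) : ℚ := (k : ℚ) / ((m * n + k : ℕ) : ℚ) * ((m * n + k).choose n : ℚ)

/-- Modified Raney numbers with value 1 at `n = 0` (even when `k = 0`). -/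
def FcAux (m n k : ℕ) : ℚ := if n = 0 then 1 else fcAux m n k

lemma fcAux_zero_right (m n : ℕ) : fcAux m n 0 = 0 := by
  simp [fcAux]

lemma fcAux_zero_left (m k : ℕ) (hk : 1 ≤ k) : fcAux m 0 k = 1 := by
  have hk0 : (k : ℚ) ≠ 0 := Nat.cast_ne_zero.mpr (by omega)
  simp [fcAux, hk0]

lemma keyAlg (A C0 C1 kk mm nn : ℚ) (hA : A = mm*(nn+1)+kk)
    (hr : C1*(nn+1) = C0*(A-nn)) (h0 : A ≠ 0) (h1 : A+1 ≠ 0) :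
    (kk+1)/(A+1)*(C0+C1) = kk/A*C1 + (kk+mm)/A*C0 := by
  field_simp
  linear_combination (mm : ℚ) * hr + (C0+C1) * hA

lemma fcAux_rec (m n k : ℕ) (hm : 1 ≤ m) :
    fcAux m (n + 1) (k + 1) = fcAux m (n + 1) k + fcAux m n (k + m) := by
  have e1 : m * (n + 1) + (k + 1) = m * (n + 1) + k + 1 := by omega
  have e2 : m * n + (k + m) = m * (n + 1) + k := by ring
  have hna : n ≤ m * (n + 1) + k := by nlinarith
  have hrQ : ((m * (n + 1) + k).choose (n + 1) : ℚ) * ((n : ℚ) + 1)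
      = ((m * (n + 1) + k).choose n : ℚ) * (((m : ℚ) * ((n : ℚ) + 1) + (k : ℚ)) - (n : ℚ)) := by
    have h := Nat.choose_succ_right_eq (m * (n + 1) + k) n
    have hc := congrArg (Nat.cast : ℕ → ℚ) h
    rw [Nat.cast_mul, Nat.cast_mul, Nat.cast_sub hna] at hc
    push_cast at hc ⊢
    linarith [hc]
  have h0 : ((m : ℚ) * ((n : ℚ) + 1) + (k : ℚ)) ≠ 0 := by
    have : (0 : ℚ) < (m : ℚ) * ((n : ℚ) + 1) + (k : ℚ) := by
      have hm' : (1 : ℚ) ≤ (m : ℚ) := by exact_mod_cast hm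
      have hn' : (0 : ℚ) ≤ (n : ℚ) := Nat.cast_nonneg n
      have hk' : (0 : ℚ) ≤ (k : ℚ) := Nat.cast_nonneg k
      nlinarith
    exact this.ne'
  have h1 : ((m : ℚ) * ((n : ℚ) + 1) + (k : ℚ)) + 1 ≠ 0 := by
    intro hcon
    apply h0
    have : (0 : ℚ) ≤ (m : ℚ) * ((n : ℚ) + 1) + (k : ℚ) := by positivity
    linarith
  unfold fcAux
  rw [e1, e2, Nat.choose_succ_succ (m * (n + 1) + k) n]
  push_cast
  have := keyAlg ((m : ℚ) * ((n : ℚ) + 1) + (k : ℚ))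
      ((m * (n + 1) + k).choose n : ℚ) ((m * (n + 1) + k).choose (n + 1) : ℚ)
      (k : ℚ) (m : ℚ) (n : ℚ) (by ring) hrQ h0 h1
  push_cast at this
  linarith [this]

lemma FcAux_rec (m n k : ℕ) (hm : 1 ≤ m) :
    FcAux m (n + 1) (k + 1) = FcAux m (n + 1) k + FcAux m n (k + m) := by
  have h := fcAux_rec m n k hm
  rcases Nat.eq_zero_or_pos n with hn | hn
  · subst hn
    unfold FcAux
    rw [if_neg (Nat.succ_ne_zero 0), if_neg (Nat.succ_ne_zero 0), if_pos rfl, h,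
      fcAux_zero_left m (k + m) (by omega)]
  · unfold FcAux
    rw [if_neg (Nat.succ_ne_zero n), if_neg (Nat.succ_ne_zero n), if_neg (by omega)]
    exact h

lemma FcAux_l0 (m n k : ℕ) :
    (∑ j ∈ Finset.range (n + 1), FcAux m j k * FcAux m (n - j) 0) = FcAux m n k := by
  rw [Finset.sum_eq_single n]
  · simp [FcAux]
  · intro j hj hne
    have hj' : j ≤ n := Nat.lt_succ_iff.mp (Finset.mem_range.mp hj)
    have : n - j ≠ 0 := by omega
    simp [FcAux, this, fcAux_zero_right]
  · intro h
    exact absurd (Finset.self_mem_range_succ n) h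

lemma FcAux_conv (m : ℕ) (hm : 1 ≤ m) :
    ∀ n k l, (∑ j ∈ Finset.range (n + 1), FcAux m j k * FcAux m (n - j) l) = FcAux m n (k + l) := by
  intro n
  induction n using Nat.strong_induction_on with
  | _ n ih =>
    rcases Nat.eq_zero_or_pos n with hn | hn
    · subst hn
      intro k l
      simp [FcAux]
    · obtain ⟨N, rfl⟩ : ∃ N, n = N + 1 := ⟨n - 1, by omega⟩
      intro k l
      induction l with
      | zero => exact FcAux_l0 m (N + 1) k
      | succ l ihl =>
        rw [Finset.sum_range_succ, Nat.sub_self]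
        have hstep : ∀ j ∈ Finset.range (N + 1),
            FcAux m j k * FcAux m (N + 1 - j) (l + 1)
              = FcAux m j k * FcAux m (N + 1 - j) l + FcAux m j k * FcAux m (N - j) (l + m) := by
          intro j hj
          have hj' : j ≤ N := Nat.lt_succ_iff.mp (Finset.mem_range.mp hj)
          have h1 : N + 1 - j = (N - j) + 1 := by omega
          rw [h1, FcAux_rec m (N - j) l hm, mul_add]
        rw [Finset.sum_congr rfl hstep, Finset.sum_add_distrib]
        have hA : (∑ j ∈ Finset.range (N + 1), FcAux m j k * FcAux m (N + 1 - j) l)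
            + FcAux m (N + 1) k * FcAux m 0 (l + 1)
            = FcAux m (N + 1) (k + l) := by
          have h0 : FcAux m 0 (l + 1) = FcAux m 0 l := by simp [FcAux]
          rw [h0]
          have h2 := ihl
          rw [Finset.sum_range_succ, Nat.sub_self] at h2
          exact h2
        have hB : (∑ j ∈ Finset.range (N + 1), FcAux m j k * FcAux m (N - j) (l + m))
            = FcAux m N (k + (l + m)) := ih N (by omega) k (l + m)
        have hrec := FcAux_rec m N (k + l) hm
        have hkl : k + (l + m) = (k + l) + m := by omega
        have hkl2 : k + (l + 1) = (k + l) + 1 := by omega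
        rw [hkl] at hB
        rw [hkl2, hrec, ← hA, ← hB]
        ring

/-- The formal power series `U(x) = Σ_{r≥1} (1/r)·binom(r(s-1), r-1)·x^r` satisfies the
functional equation `U(x) = x·(1 + U(x))^{s-1}`. -/
theorem fussCatalan_series_functional_eq (s : ℕ) (hs : 3 ≤ s)
    (U : PowerSeries ℚ)
    (hU : U = PowerSeries.mk fun r =>
      if r = 0 then 0 else (1 / (r : ℚ)) * (Nat.choose (r * (s - 1)) (r - 1) : ℚ)) :
    U = PowerSeries.X * (1 + U) ^ (s - 1) := by
  set m : ℕ := s - 1 with hmdef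
  have hm : 1 ≤ m := by omega
  -- coefficients of 1 + U
  have hcoeff1U : ∀ j, (coeff j) (1 + U) = FcAux m j 1 := by
    intro j
    rw [map_add, coeff_one, hU, coeff_mk]
    cases j with
    | zero => simp [FcAux]
    | succ r =>
      rw [if_neg (Nat.succ_ne_zero r), if_neg (Nat.succ_ne_zero r), zero_add]
      simp only [Nat.succ_sub_one]
      unfold FcAux fcAux
      rw [if_neg (Nat.succ_ne_zero r)]
      have h := Nat.add_one_mul_choose_eq (m * (r + 1)) r
      have hQ : ((m * (r + 1) + 1 : ℕ) : ℚ) * ((m * (r + 1)).choose r : ℚ)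
          = ((m * (r + 1) + 1).choose (r + 1) : ℚ) * ((r : ℚ) + 1) := by
        exact_mod_cast congrArg (Nat.cast : ℕ → ℚ) h
      have hcomm : (r + 1) * m = m * (r + 1) := Nat.mul_comm _ _
      rw [hcomm]
      have hr1 : ((r : ℚ) + 1) ≠ 0 := by positivity
      have hd : ((m * (r + 1) + 1 : ℕ) : ℚ) ≠ 0 := by
        have : 0 < m * (r + 1) + 1 := by omega
        exact_mod_cast this.ne'
      push_cast at hQ ⊢
      field_simp
      linear_combination hQ
  -- coefficients of (1 + U)^k
  have hpow : ∀ k n, (coeff n) ((1 + U) ^ k) = FcAux m n k := by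
    intro k
    induction k with
    | zero =>
      intro n
      rw [pow_zero, coeff_one]
      unfold FcAux
      split
      · rfl
      · rw [fcAux_zero_right]
    | succ k ihk =>
      intro n
      rw [pow_succ, coeff_mul, Finset.Nat.sum_antidiagonal_eq_sum_range_succ_mk]
      have hc : (∑ j ∈ Finset.range (n + 1), (coeff j) ((1 + U) ^ k) * (coeff (n - j)) (1 + U))
          = ∑ j ∈ Finset.range (n + 1), FcAux m j k * FcAux m (n - j) 1 := by
        apply Finset.sum_congr rfl
        intro j _
        rw [ihk j, hcoeff1U (n - j)]
      rw [hc, FcAux_conv m hm n k 1]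
  -- finish by comparing coefficients
  ext n
  cases n with
  | zero =>
    rw [hU]
    simp
  | succ n =>
    rw [coeff_succ_X_mul, hpow m n, hU, coeff_mk]
    rw [if_neg (Nat.succ_ne_zero n)]
    simp only [Nat.succ_sub_one]
    cases n with
    | zero =>
      simp [FcAux, hm]
    | succ N =>
      unfold FcAux fcAux
      rw [if_neg (Nat.succ_ne_zero N)]
      have harg : m * (N + 1) + m = (N + 1 + 1) * m := by ring
      rw [harg]
      have hm0 : (m : ℚ) ≠ 0 := Nat.cast_ne_zero.mpr (by omega)
      have hN2 : ((N : ℚ) + 1 + 1) ≠ 0 := by positivity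
      push_cast
      field_simp
end

section
/- For integers s ≥ 3, t ≥ 1 and i ≥ t, the rational number (t/i)·binom(i(s-1), i-t) is a positive integer; i.e., i divides t·binom(i(s-1), i-t). -/
/-- For integers `s ≥ 3`, `t ≥ 1` and `i ≥ t`, the rational number
`(t/i)·binom(i(s-1), i-t)` is a positive integer: `i` divides `t·binom(i(s-1), i-t)`
and the quotient is positive. -/
theorem fussCatalan_power_coeff_pos_integer (s t i : ℕ) (hs : 3 ≤ s) (ht : 1 ≤ t)
    (hti : t ≤ i) :
    i ∣ t * Nat.choose (i * (s - 1)) (i - t) ∧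
      0 < t * Nat.choose (i * (s - 1)) (i - t) / i := by
  have hi : 1 ≤ i := le_trans ht hti
  have hm : 1 ≤ s - 1 := by omega
  have hk : i - t ≤ i * (s - 1) := by
    calc i - t ≤ i := Nat.sub_le _ _
    _ = i * 1 := (Nat.mul_one i).symm
    _ ≤ i * (s - 1) := Nat.mul_le_mul_left i hm
  have hCpos : 0 < Nat.choose (i * (s - 1)) (i - t) := Nat.choose_pos hk
  have hdvd : i ∣ t * Nat.choose (i * (s - 1)) (i - t) := by
    rcases Nat.eq_or_lt_of_le hti with h | h
    · subst h; exact Dvd.intro _ rfl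
    · -- i - t = k + 1
      obtain ⟨k, hk1⟩ : ∃ k, i - t = k + 1 := ⟨i - t - 1, by omega⟩
      obtain ⟨n, hn1⟩ : ∃ n, i * (s - 1) = n + 1 := ⟨i * (s - 1) - 1, by
        have : 1 ≤ i * (s - 1) := le_trans hi (by calc i = i * 1 := (Nat.mul_one i).symm
          _ ≤ i * (s - 1) := Nat.mul_le_mul_left i hm)
        omega⟩
      have hid : (i - t) * Nat.choose (i * (s - 1)) (i - t)
          = (i * (s - 1)) * Nat.choose (i * (s - 1) - 1) (i - t - 1) := by
        rw [hk1, hn1]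
        simp only [Nat.add_sub_cancel]
        rw [Nat.mul_comm (k + 1)]
        exact (Nat.add_one_mul_choose_eq n k).symm
      have hsum : t * Nat.choose (i * (s - 1)) (i - t)
            + i * ((s - 1) * Nat.choose (i * (s - 1) - 1) (i - t - 1))
          = i * Nat.choose (i * (s - 1)) (i - t) := by
        rw [← Nat.mul_assoc, ← hid, ← Nat.add_mul]
        congr 1
        omega
      have h1 : i ∣ t * Nat.choose (i * (s - 1)) (i - t)
            + i * ((s - 1) * Nat.choose (i * (s - 1) - 1) (i - t - 1)) := by
        rw [hsum]; exact Dvd.intro _ rfl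
      have h2 : i ∣ i * ((s - 1) * Nat.choose (i * (s - 1) - 1) (i - t - 1)) :=
        Dvd.intro _ rfl
      have := Nat.dvd_sub h1 h2
      simpa using this
  refine ⟨hdvd, ?_⟩
  have hxpos : 0 < t * Nat.choose (i * (s - 1)) (i - t) := Nat.mul_pos ht hCpos
  exact Nat.div_pos (Nat.le_of_dvd hxpos hdvd) hi
end

section
/- For integers s ≥ 3 and k ≥ 2, the coefficient of x^k in (1/2)·(U(x)² − U(x²)) equals (1/k)·binom((s-1)k, k-2) − (1/k)·binom((s-1)(k/2), (k/2)-1), where the second term is omitted (taken to be 0) if k is odd. -/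
open PowerSeries Finset

/-- Guarded coefficient formula for `coeff n (U^t)`. -/
noncomputable def RC (e n t : ℕ) : ℚ :=
  if n = 0 then (if t = 0 then 1 else 0)
  else if t = 0 then 0
  else if n < t then 0
  else ((t : ℚ) / n) * (Nat.choose (n * e) (n - t) : ℚ)

lemma choose_succ_mul (x y : ℕ) (hx : 1 ≤ x) (hy : 1 ≤ y) :
    x * Nat.choose (x - 1) (y - 1) = Nat.choose x y * y := by
  have h := Nat.add_one_mul_choose_eq (x - 1) (y - 1)
  have h1 : x - 1 + 1 = x := by omega
  have h2 : y - 1 + 1 = y := by omega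
  rw [h1, h2] at h
  exact h

lemma key_sum (e m t : ℕ) (he : 2 ≤ e) (hm : 1 ≤ m) (ht : 1 ≤ t) :
    ∑ j ∈ range (e * t + 1), RC e m j * (Nat.choose (e * t) j : ℚ)
      = ((t : ℚ) / (m + t)) * (Nat.choose ((m + t) * e) m : ℚ) := by
  have ha1 : 1 ≤ e * t := by have := Nat.mul_le_mul he ht; omega
  have hN1 : 1 ≤ (m + t) * e := by
    have := Nat.mul_le_mul (by omega : 1 ≤ m + t) (by omega : 1 ≤ e); omega
  have hm0 : (m : ℚ) ≠ 0 := by exact_mod_cast (by omega : m ≠ 0)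
  have hmt0 : ((m : ℚ) + t) ≠ 0 := by
    have : ((m + t : ℕ) : ℚ) ≠ 0 := by exact_mod_cast (by omega : m + t ≠ 0)
    push_cast at this; exact this
  -- termwise rewrite
  have hterm : ∀ j, RC e m j * (Nat.choose (e * t) j : ℚ)
      = ((e : ℚ) * t / m) * (if j = 0 ∨ m < j then 0
          else (Nat.choose (e * t - 1) (j - 1) : ℚ) * (Nat.choose (m * e) (m - j) : ℚ)) := by
    intro j
    rcases Nat.eq_zero_or_pos j with hj | hj
    · subst hj
      rw [if_pos (Or.inl rfl), mul_zero]
      simp only [RC]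
      rw [if_neg (by omega : ¬ m = 0)]
      norm_num
    by_cases hjm : m < j
    · rw [if_pos (Or.inr hjm), mul_zero]
      simp only [RC]
      rw [if_neg (by omega : ¬ m = 0), if_neg (by omega : ¬ j = 0), if_pos hjm, zero_mul]
    · rw [if_neg (by omega : ¬ (j = 0 ∨ m < j))]
      simp only [RC]
      rw [if_neg (by omega : ¬ m = 0), if_neg (by omega : ¬ j = 0), if_neg hjm]
      have hc : ((e * t : ℕ) : ℚ) * (Nat.choose (e * t - 1) (j - 1) : ℚ)
          = (Nat.choose (e * t) j : ℚ) * j := by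
        exact_mod_cast choose_succ_mul (e * t) j ha1 hj
      push_cast at hc
      field_simp
      linear_combination (-(Nat.choose (m * e) (m - j) : ℚ)) * hc
  rw [Finset.sum_congr rfl (fun j _ => hterm j), ← Finset.mul_sum]
  rw [Finset.sum_range_succ']
  have hshift : ∀ i, (if i + 1 = 0 ∨ m < i + 1 then (0:ℚ)
        else (Nat.choose (e * t - 1) (i + 1 - 1) : ℚ) * (Nat.choose (m * e) (m - (i + 1)) : ℚ))
      = (if i < m then (Nat.choose (e * t - 1) i : ℚ) * (Nat.choose (m * e) (m - 1 - i) : ℚ)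
          else 0) := by
    intro i
    by_cases h : i < m
    · have e1 : i + 1 - 1 = i := by omega
      have e2 : m - (i + 1) = m - 1 - i := by omega
      rw [e1, e2, if_neg (by omega : ¬ (i + 1 = 0 ∨ m < i + 1)), if_pos h]
    · rw [if_neg h, if_pos (Or.inr (by omega))]
  simp only [hshift]
  rw [if_pos (Or.inl trivial), add_zero]
  -- extend/contract sum ranges
  have hzero : ∀ i, e * t ≤ i →
      (Nat.choose (e * t - 1) i : ℚ) * (Nat.choose (m * e) (m - 1 - i) : ℚ) = 0 := by
    intro i hi
    rw [Nat.choose_eq_zero_of_lt (by omega)]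
    simp
  have h1 : ∑ i ∈ range (e * t), (if i < m then
        (Nat.choose (e * t - 1) i : ℚ) * (Nat.choose (m * e) (m - 1 - i) : ℚ) else 0)
      = ∑ i ∈ range m, (Nat.choose (e * t - 1) i : ℚ) * (Nat.choose (m * e) (m - 1 - i) : ℚ) := by
    rw [Finset.sum_subset (Finset.range_subset_range.2 (Nat.le_add_right (e * t) m))
      (fun i _ hi => by
        simp only [Finset.mem_range, not_lt] at hi
        by_cases h : i < m
        · rw [if_pos h]; exact hzero i hi
        · rw [if_neg h])]
    rw [← Finset.sum_subset (Finset.range_subset_range.2 (by omega : m ≤ e * t + m))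
      (fun i _ hi => by
        simp only [Finset.mem_range, not_lt] at hi
        rw [if_neg (by omega)])]
    exact Finset.sum_congr rfl (fun i hi => by rw [if_pos (Finset.mem_range.1 hi)])
  rw [h1]
  -- Vandermonde
  have hvdm : ∑ i ∈ range m, (Nat.choose (e * t - 1) i : ℚ) * (Nat.choose (m * e) (m - 1 - i) : ℚ)
      = (Nat.choose ((m + t) * e - 1) (m - 1) : ℚ) := by
    have hv := Nat.add_choose_eq (e * t - 1) (m * e) (m - 1)
    rw [Nat.sum_antidiagonal_eq_sum_range_succ_mk] at hv
    have hd : (m + t) * e = m * e + e * t := by ring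
    have hab : e * t - 1 + m * e = (m + t) * e - 1 := by omega
    rw [hab, (by omega : (m - 1).succ = m)] at hv
    rw [hv]
    push_cast
    ring
  rw [hvdm]
  -- final arithmetic
  have hc2 : (((m + t) * e : ℕ) : ℚ) * (Nat.choose ((m + t) * e - 1) (m - 1) : ℚ)
      = (Nat.choose ((m + t) * e) m : ℚ) * m := by
    exact_mod_cast choose_succ_mul ((m + t) * e) m hN1 hm
  push_cast at hc2
  rw [div_mul_eq_mul_div, div_mul_eq_mul_div, div_eq_div_iff hm0 hmt0]
  linear_combination (t : ℚ) * hc2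

lemma coeff_U_pow (e : ℕ) (he : 2 ≤ e) (U : PowerSeries ℚ)
    (hU0 : PowerSeries.constantCoeff U = 0)
    (hU : U = PowerSeries.X * (1 + U) ^ e) :
    ∀ n t, PowerSeries.coeff n (U ^ t) = RC e n t := by
  intro n
  induction n using Nat.strong_induction_on with
  | _ n IH =>
    intro t
    rcases Nat.eq_zero_or_pos t with ht | ht
    · subst ht
      simp only [pow_zero, RC, coeff_one]
      by_cases hn : n = 0 <;> simp [hn]
    rcases Nat.eq_zero_or_pos n with hn | hn
    · subst hn
      rw [coeff_zero_eq_constantCoeff, map_pow, hU0, zero_pow (by omega)]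
      simp only [RC, if_pos trivial]
      split_ifs <;> first | rfl | omega
    have hUt : U ^ t = (1 + U) ^ (e * t) * X ^ t := by
      conv_lhs => rw [hU]
      rw [mul_pow, ← pow_mul, mul_comm]
    rw [hUt, PowerSeries.coeff_mul_X_pow']
    by_cases hnt : t ≤ n
    case neg =>
      rw [if_neg hnt]
      simp only [RC]
      rw [if_neg (by omega), if_neg (by omega), if_pos (by omega)]
    rw [if_pos hnt]
    rw [show (1 : PowerSeries ℚ) + U = U + 1 from add_comm 1 U, add_pow]
    simp only [one_pow, mul_one]
    rw [map_sum]
    have hstep : ∀ j ∈ range (e * t + 1),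
        PowerSeries.coeff (n - t) (U ^ j * ((Nat.choose (e * t) j : ℕ) : PowerSeries ℚ))
          = RC e (n - t) j * (Nat.choose (e * t) j : ℚ) := by
      intro j _
      rw [← map_natCast (PowerSeries.C) (Nat.choose (e * t) j), PowerSeries.coeff_mul_C,
        IH (n - t) (by omega) j]
    rw [Finset.sum_congr rfl hstep]
    by_cases hm : n = t
    · subst hm
      rw [Nat.sub_self]
      rw [Finset.sum_eq_single 0 (fun j _ hj => by
          simp [RC, hj])
        (fun h => absurd (Finset.mem_range.2 (by omega)) h)]
      have hn0 : (n : ℚ) ≠ 0 := by exact_mod_cast (by omega : n ≠ 0)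
      simp [RC, (by omega : ¬ n = 0), (by omega : ¬ n < n), div_self hn0]
      split_ifs <;> first | rfl | omega
    · have hm1 : 1 ≤ n - t := by omega
      rw [key_sum e (n - t) t he hm1 ht]
      have hnn : ((n - t : ℕ) : ℚ) + (t : ℚ) = (n : ℚ) := by
        have : ((n - t + t : ℕ) : ℚ) = (n : ℚ) := by rw [Nat.sub_add_cancel hnt]
        push_cast at this; linarith
      have hnn2 : (n - t) + t = n := by omega
      rw [hnn2, hnn]
      simp only [RC]
      rw [if_neg (by omega : ¬ n = 0), if_neg (by omega : ¬ t = 0), if_neg (by omega : ¬ n < t)]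

/-- For `s ≥ 3` and `k ≥ 2`, the coefficient of `x^k` in `(1/2)(U(x)² − U(x²))` equals
`(1/k)·binom((s-1)k, k-2) − (1/k)·binom((s-1)(k/2), k/2−1)`, the second term being omitted
when `k` is odd. Here `U` is the unique power series with zero constant term satisfying
`U = X(1+U)^{s-1}`, and `U(x²)` is the series whose `x^{2j}`-coefficient is the
`x^j`-coefficient of `U`. -/
theorem half_Usq_sub_Uxsq_coeff (s k : ℕ) (hs : 3 ≤ s) (hk : 2 ≤ k)
    (U : PowerSeries ℚ)
    (hU0 : PowerSeries.constantCoeff U = 0)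
    (hU : U = PowerSeries.X * (1 + U) ^ (s - 1))
    (Usq : PowerSeries ℚ)
    (hUsq : Usq = PowerSeries.mk fun j =>
      if 2 ∣ j then PowerSeries.coeff (j / 2) U else 0) :
    PowerSeries.coeff k ((1 / 2 : ℚ) • (U ^ 2 - Usq))
      = (1 / (k : ℚ)) * (Nat.choose ((s - 1) * k) (k - 2) : ℚ)
        - (if 2 ∣ k then (1 / (k : ℚ)) * (Nat.choose ((s - 1) * (k / 2)) (k / 2 - 1) : ℚ)
          else 0) := by
  have he : 2 ≤ s - 1 := by omega
  have hpow := coeff_U_pow (s - 1) he U hU0 hU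
  have hk0 : (k : ℚ) ≠ 0 := by exact_mod_cast (by omega : k ≠ 0)
  rw [map_smul, smul_eq_mul, map_sub]
  have h2 : PowerSeries.coeff k (U ^ 2)
      = 2 / (k : ℚ) * (Nat.choose (k * (s - 1)) (k - 2) : ℚ) := by
    rw [hpow k 2]
    simp only [RC]
    rw [if_neg (by omega : ¬ k = 0), if_neg (by omega : ¬ (2 : ℕ) = 0),
      if_neg (by omega : ¬ k < 2)]
    norm_num
  rw [h2, hUsq, coeff_mk]
  by_cases hdvd : 2 ∣ k
  · rw [if_pos hdvd, if_pos hdvd]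
    obtain ⟨c, hc⟩ := hdvd
    have hc1 : 1 ≤ c := by omega
    have hk2 : k / 2 = c := by omega
    rw [hk2, show (PowerSeries.coeff c) U = (PowerSeries.coeff c) (U ^ 1) by rw [pow_one], hpow c 1]
    simp only [RC]
    rw [if_neg (by omega : ¬ c = 0), if_neg (by omega : ¬ (1 : ℕ) = 0),
      if_neg (by omega : ¬ c < 1)]
    rw [Nat.mul_comm (s - 1) k, Nat.mul_comm (s - 1) c]
    have hc0 : (c : ℚ) ≠ 0 := by exact_mod_cast (by omega : c ≠ 0)
    have hkc : (k : ℚ) = 2 * c := by exact_mod_cast hc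
    rw [hkc]
    push_cast
    field_simp
  · rw [if_neg hdvd, if_neg hdvd]
    rw [Nat.mul_comm (s - 1) k]
    push_cast
    field_simp
    ring
end

section
/- For integers s ≥ 3 and k ≥ 2, the coefficient of x^2 in U(x)² computed two ways agree: Σ_{a+b=k, a,b≥1} (1/a)binom(a(s-1),a-1)·(1/b)binom(b(s-1),b-1) = (2/k)·binom(k(s-1), k-2). -/
namespace FussConv

/-- `B w n x = C(x + n(w+1), n)` as a rational number. -/
def B (w n x : ℕ) : ℚ := (Nat.choose (x + n * (w + 1)) n : ℚ)

/-- Rothe's `A`-sequence at parameter `z = w+1`. -/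
def A (w : ℕ) : ℕ → ℕ → ℚ
  | 0, _ => 1
  | n + 1, x => B w (n + 1) x - (w + 1) * B w n (x + w)

lemma A_zero (w x : ℕ) : A w 0 x = 1 := rfl

lemma A_succ (w n x : ℕ) : A w (n + 1) x = B w (n + 1) x - (w + 1) * B w n (x + w) := rfl

lemma pascalB (w n x : ℕ) : B w (n + 1) (x + 1) = B w (n + 1) x + B w n (x + (w + 1)) := by
  unfold B
  have h : x + 1 + (n + 1) * (w + 1) = (x + (n + 1) * (w + 1)) + 1 := by ring
  have h2 : x + (w + 1) + n * (w + 1) = x + (n + 1) * (w + 1) := by ring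
  rw [h, h2, Nat.choose_succ_succ]
  push_cast
  ring

lemma A_step (w a x : ℕ) : A w (a + 1) (x + 1) = A w (a + 1) x + A w a (x + (w + 1)) := by
  cases a with
  | zero =>
    simp only [A_succ, A_zero, B, Nat.zero_add, Nat.one_mul, Nat.zero_mul, Nat.add_zero,
      Nat.choose_one_right, Nat.choose_zero_right]
    push_cast
    ring
  | succ a =>
    simp only [A_succ]
    have e1 : x + 1 + w = (x + w) + 1 := by ring
    rw [pascalB w (a+1) x, e1, pascalB w a (x + w)]
    have e2 : x + w + (w + 1) = x + (w + 1) + w := by ring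
    rw [e2]
    ring

lemma A_base (w a : ℕ) : A w (a + 1) 0 = 0 := by
  rw [A_succ]
  unfold B
  have key := Nat.add_one_mul_choose_eq (w + a * (w + 1)) a
  have hN : w + a * (w + 1) + 1 = (a + 1) * (w + 1) := by ring
  rw [hN] at key
  have e1 : (0:ℕ) + (a + 1) * (w + 1) = (a + 1) * (w + 1) := by ring
  have e2 : (0:ℕ) + w + a * (w + 1) = w + a * (w + 1) := by ring
  rw [e1, e2]
  have keyq : ((a + 1) * (w + 1) * Nat.choose (w + a * (w + 1)) a : ℚ)
      = (Nat.choose ((a + 1) * (w + 1)) (a + 1) * (a + 1) : ℕ) := by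
    exact_mod_cast congrArg (Nat.cast (R := ℚ)) key
  push_cast at keyq
  have ha : ((a : ℚ) + 1) ≠ 0 := by positivity
  have h2 : ((a : ℚ) + 1) * ((Nat.choose ((a + 1) * (w + 1)) (a + 1) : ℚ)
      - ((w : ℚ) + 1) * (Nat.choose (w + a * (w + 1)) a : ℚ)) = 0 := by
    linear_combination -keyq
  have := mul_eq_zero.mp h2
  tauto

lemma conv (w y n : ℕ) :
    ∀ x, (∑ a ∈ Finset.range (n + 1), A w a x * B w (n - a) y) = B w n (x + y) := by
  induction n with
  | zero => intro x; simp [A_zero, B]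
  | succ n ih =>
    intro x
    induction x with
    | zero =>
      rw [Finset.sum_eq_single 0]
      · simp [A_zero]
      · intro b _ hb
        obtain ⟨c, rfl⟩ := Nat.exists_eq_succ_of_ne_zero hb
        rw [A_base]; ring
      · intro h; exact absurd (Finset.mem_range.mpr (Nat.succ_pos _)) h
    | succ x ihx =>
      rw [Finset.sum_range_succ'] at ihx ⊢
      simp only [Nat.succ_sub_succ_eq_sub, Nat.sub_zero] at ihx ⊢
      have hstep : ∀ i ∈ Finset.range (n + 1), A w (i + 1) (x + 1) * B w (n - i) y
          = A w (i + 1) x * B w (n - i) y + A w i (x + (w + 1)) * B w (n - i) y := by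
        intro i _; rw [A_step]; ring
      rw [Finset.sum_congr rfl hstep, Finset.sum_add_distrib]
      rw [ih (x + (w + 1))]
      have e1 : x + 1 + y = (x + y) + 1 := by ring
      have e2 : x + (w + 1) + y = (x + y) + (w + 1) := by ring
      rw [e1, e2, pascalB, ← ihx, A_zero, A_zero]
      ring

lemma A_one_val (w n : ℕ) :
    A w (n + 1) 1 = (1 / ((n : ℚ) + 1)) * (Nat.choose ((n + 1) * (w + 1)) n : ℚ) := by
  rw [A_succ]
  unfold B
  have e1 : 1 + (n + 1) * (w + 1) = ((n + 1) * (w + 1)) + 1 := by ring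
  have e2 : 1 + w + n * (w + 1) = (n + 1) * (w + 1) := by ring
  rw [e1, e2, Nat.choose_succ_succ]
  have key := Nat.choose_succ_right_eq ((n + 1) * (w + 1)) n
  have hsub : (n + 1) * (w + 1) - n = (n + 1) * w + 1 := by
    have h : (n + 1) * (w + 1) = (n + 1) * w + (n + 1) := by ring
    omega
  rw [hsub] at key
  have keyq : (Nat.choose ((n + 1) * (w + 1)) (n + 1) : ℚ) * ((n : ℚ) + 1)
      = (Nat.choose ((n + 1) * (w + 1)) n : ℚ) * (((n : ℚ) + 1) * w + 1) := by
    exact_mod_cast key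
  have ha : ((n : ℚ) + 1) ≠ 0 := by positivity
  push_cast
  field_simp
  linear_combination keyq

lemma convAA (w n : ℕ) :
    (∑ a ∈ Finset.range (n + 2), A w a 1 * A w (n + 1 - a) 1) = A w (n + 1) 2 := by
  rw [Finset.sum_range_succ]
  have hsucc : ∀ a ∈ Finset.range (n + 1), A w a 1 * A w (n + 1 - a) 1
      = A w a 1 * B w (n + 1 - a) 1 - (w + 1) * (A w a 1 * B w (n - a) (1 + w)) := by
    intro a ha
    have h : n + 1 - a = (n - a) + 1 := by
      simp only [Finset.mem_range] at ha; omega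
    rw [h, A_succ, ← h]
    ring
  rw [Finset.sum_congr rfl hsucc, Finset.sum_sub_distrib, ← Finset.mul_sum,
    conv w (1 + w) n 1]
  have h3 := conv w 1 (n + 1) 1
  rw [Finset.sum_range_succ] at h3
  simp only [Nat.sub_self] at h3
  have hB0 : B w 0 1 = 1 := by simp [B]
  rw [hB0] at h3
  have e' : (1 : ℕ) + 1 = 2 := rfl
  rw [e'] at h3
  simp only [Nat.sub_self]
  rw [A_zero, A_succ w n 2]
  have e : 1 + (1 + w) = 2 + w := by ring
  rw [e]
  linear_combination h3

lemma final_val (w m : ℕ) :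
    A w (m + 2) 2 - 2 * A w (m + 2) 1
      = 2 / ((m : ℚ) + 2) * (Nat.choose ((m + 2) * (w + 1)) m : ℚ) := by
  have h2 : m + 2 = (m + 1) + 1 := rfl
  rw [h2, A_succ, A_one_val]
  unfold B
  have e1 : 2 + (m + 1 + 1) * (w + 1) = ((m + 2) * (w + 1) + 1) + 1 := by ring
  have e2 : 2 + w + (m + 1) * (w + 1) = (m + 2) * (w + 1) + 1 := by ring
  have e3 : (m + 1 + 1) * (w + 1) = (m + 2) * (w + 1) := by ring
  rw [e1, e2, e3]
  have k1 := Nat.choose_succ_right_eq ((m + 2) * (w + 1)) (m + 1)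
  have k2 := Nat.choose_succ_right_eq ((m + 2) * (w + 1)) m
  have hexp : (m + 2) * (w + 1) = (m + 2) * w + (m + 2) := by ring
  have hs1 : (m + 2) * (w + 1) - (m + 1) = (m + 2) * w + 1 := by omega
  have hs2 : (m + 2) * (w + 1) - m = (m + 2) * w + 2 := by omega
  rw [hs1] at k1
  rw [hs2] at k2
  have k1q : (Nat.choose ((m + 2) * (w + 1)) (m + 1 + 1) : ℚ) * ((m : ℚ) + 2)
      = (Nat.choose ((m + 2) * (w + 1)) (m + 1) : ℚ) * (((m : ℚ) + 2) * w + 1) := by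
    exact_mod_cast k1
  have k2q : (Nat.choose ((m + 2) * (w + 1)) (m + 1) : ℚ) * ((m : ℚ) + 1)
      = (Nat.choose ((m + 2) * (w + 1)) m : ℚ) * (((m : ℚ) + 2) * w + 2) := by
    exact_mod_cast k2
  rw [Nat.choose_succ_succ ((m + 2) * (w + 1) + 1) (m + 1),
    Nat.choose_succ_succ ((m + 2) * (w + 1)) (m + 1),
    Nat.choose_succ_succ ((m + 2) * (w + 1)) m]
  have ha : ((m : ℚ) + 2) ≠ 0 := by positivity
  push_cast
  field_simp
  linear_combination ((m : ℚ) + 2) * (k1q + k2q)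

end FussConv

/-- Convolution identity for Fuss-Catalan numbers: the `x^k`-coefficient of `U(x)²`,
computed as the convolution of coefficients of `U`, equals `(2/k)·binom(k(s-1), k-2)`. -/
theorem fussCatalan_convolution (s k : ℕ) (hs : 3 ≤ s) (hk : 2 ≤ k) :
    ∑ a ∈ Finset.Icc 1 (k - 1),
        ((1 / (a : ℚ)) * (Nat.choose (a * (s - 1)) (a - 1) : ℚ)) *
          ((1 / ((k - a : ℕ) : ℚ)) * (Nat.choose ((k - a) * (s - 1)) (k - a - 1) : ℚ))
      = (2 / (k : ℚ)) * (Nat.choose (k * (s - 1)) (k - 2) : ℚ) := by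
  obtain ⟨w, rfl⟩ : ∃ w, s = w + 2 := ⟨s - 2, by omega⟩
  obtain ⟨m, rfl⟩ : ∃ m, k = m + 2 := ⟨k - 2, by omega⟩
  simp only [show w + 2 - 1 = w + 1 from rfl, show m + 2 - 1 = m + 1 from rfl,
    show m + 2 - 2 = m from rfl]
  rw [← Finset.Ico_add_one_right_eq_Icc, Finset.sum_Ico_eq_sum_range]
  simp only [show m + 1 + 1 - 1 = m + 1 from rfl]
  have key := FussConv.convAA w (m + 1)
  rw [Finset.sum_range_succ] at key
  rw [Finset.sum_range_succ'] at key
  simp only [Nat.sub_self, Nat.sub_zero, Nat.succ_sub_succ_eq_sub, FussConv.A_zero,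
    mul_one, one_mul] at key
  have hsum : (∑ i ∈ Finset.range (m + 1),
      ((1 / ((1 + i : ℕ) : ℚ)) * (Nat.choose ((1 + i) * (w + 1)) (1 + i - 1) : ℚ)) *
        ((1 / ((m + 2 - (1 + i) : ℕ) : ℚ)) *
          (Nat.choose ((m + 2 - (1 + i)) * (w + 1)) (m + 2 - (1 + i) - 1) : ℚ)))
      = ∑ i ∈ Finset.range (m + 1),
          FussConv.A w (i + 1) 1 * FussConv.A w (m + 1 - i) 1 := by
    refine Finset.sum_congr rfl fun i hi => ?_
    simp only [Finset.mem_range] at hi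
    have ec : 1 + i - 1 = i := by omega
    have ed : m + 2 - (1 + i) - 1 = m - i := by omega
    have eb : m + 2 - (1 + i) = (m - i) + 1 := by omega
    have eb' : m + 1 - i = (m - i) + 1 := by omega
    have ee : 1 + i = i + 1 := by omega
    rw [ec, ed, eb, eb', ee, FussConv.A_one_val w i, FussConv.A_one_val w (m - i)]
    push_cast
    ring
  rw [hsum]
  push_cast
  linear_combination key + FussConv.final_val w m
end

section
/- Burnside/Pólya count for rooted clusters: F_s(x) = x·(1/s)·Σ_{d|s} φ(d)·(1 + U_s(x^d))^{s/d}, where U_s(x) = x(1+U_s(x))^{s-1}, has x^k-coefficient (for k ≥ 2) equal to Σ_{d | gcd(s, k-1)} Σ_{t=1}^{min(s/d, (k-1)/d)} [φ(d)·d·t / (s·(k-1))]·binom(s/d, t)·binom((s-1)(k-1)/d, (k-1)/d − t), and x^1-coefficient equal to 1. -/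
open PowerSeries Finset


private lemma rcgf_subst_mul (d : ℕ) (hd : 0 < d) (f g : PowerSeries ℚ) :
    ((PowerSeries.mk fun j => if d ∣ j then PowerSeries.coeff (j / d) f else 0) *
     (PowerSeries.mk fun j => if d ∣ j then PowerSeries.coeff (j / d) g else 0)) =
    (PowerSeries.mk fun j => if d ∣ j then PowerSeries.coeff (j / d) (f * g) else 0) := by
  ext n
  rw [PowerSeries.coeff_mul]
  simp only [PowerSeries.coeff_mk]
  have hterm : ∀ p : ℕ × ℕ,
      (if d ∣ p.1 then PowerSeries.coeff (p.1 / d) f else 0) *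
        (if d ∣ p.2 then PowerSeries.coeff (p.2 / d) g else 0) =
      if d ∣ p.1 ∧ d ∣ p.2 then
        PowerSeries.coeff (p.1 / d) f * PowerSeries.coeff (p.2 / d) g else 0 := by
    intro p; split_ifs with h1 h2 h3 <;> simp_all
  rw [Finset.sum_congr rfl fun p _ => hterm p]
  by_cases hn : d ∣ n
  · rw [if_pos hn, PowerSeries.coeff_mul, ← Finset.sum_filter]
    obtain ⟨m, rfl⟩ := hn
    rw [Nat.mul_div_cancel_left _ hd]
    refine Finset.sum_nbij' (fun p => (p.1 / d, p.2 / d)) (fun q => (d * q.1, d * q.2)) ?_ ?_ ?_ ?_ ?_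
    · rintro ⟨a, b⟩ hp
      simp only [Finset.mem_filter, Finset.HasAntidiagonal.mem_antidiagonal] at hp ⊢
      obtain ⟨hab, h1, h2⟩ := hp
      obtain ⟨a', rfl⟩ := h1; obtain ⟨b', rfl⟩ := h2
      simp only [Nat.mul_div_cancel_left _ hd]
      rw [← Nat.mul_add] at hab
      exact Nat.eq_of_mul_eq_mul_left hd hab
    · rintro ⟨a, b⟩ hq
      simp only [Finset.mem_filter, Finset.HasAntidiagonal.mem_antidiagonal] at hq ⊢
      exact ⟨by rw [← Nat.mul_add, hq], ⟨a, rfl⟩, ⟨b, rfl⟩⟩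
    · rintro ⟨a, b⟩ hp
      simp only [Finset.mem_filter] at hp
      obtain ⟨_, ⟨a', rfl⟩, ⟨b', rfl⟩⟩ := hp
      simp [Nat.mul_div_cancel_left _ hd]
    · rintro ⟨a, b⟩ _
      simp [Nat.mul_div_cancel_left _ hd]
    · rintro ⟨a, b⟩ _
      simp [Nat.mul_div_cancel_left _ hd]
  · rw [if_neg hn]
    refine Finset.sum_eq_zero fun p hp => ?_
    rw [Finset.HasAntidiagonal.mem_antidiagonal] at hp
    rw [if_neg]
    rintro ⟨h1, h2⟩
    exact hn (hp ▸ Nat.dvd_add h1 h2)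

private lemma rcgf_subst_pow (d : ℕ) (hd : 0 < d) (f : PowerSeries ℚ) (t : ℕ) :
    (PowerSeries.mk fun j => if d ∣ j then PowerSeries.coeff (j / d) f else 0) ^ t =
    (PowerSeries.mk fun j => if d ∣ j then PowerSeries.coeff (j / d) (f ^ t) else 0) := by
  induction t with
  | zero =>
    ext n
    simp only [pow_zero, PowerSeries.coeff_mk, PowerSeries.coeff_one]
    rcases eq_or_ne n 0 with rfl | hn
    · simp [hd, Nat.zero_div]
    · rw [if_neg hn]
      split_ifs with h h2
      · exfalso
        obtain ⟨m, rfl⟩ := h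
        rw [Nat.mul_div_cancel_left _ hd] at h2
        simp [h2] at hn
      · rfl
      · rfl
  | succ t ih => rw [pow_succ, ih, rcgf_subst_mul d hd, pow_succ]


private lemma rcgf_mul_choose (a r : ℕ) (ha : 1 ≤ a) (hr : 1 ≤ r) :
    r * a.choose r = a * (a - 1).choose (r - 1) := by
  obtain ⟨a', rfl⟩ := Nat.exists_eq_add_of_le ha
  obtain ⟨r', rfl⟩ := Nat.exists_eq_add_of_le hr
  have h := Nat.add_one_mul_choose_eq a' r'
  have e1 : 1 + a' - 1 = a' := by omega
  have e2 : 1 + r' - 1 = r' := by omega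
  have e3 : 1 + a' = a' + 1 := by omega
  have e4 : 1 + r' = r' + 1 := by omega
  rw [e1, e2, e3, e4, h, Nat.mul_comm]

private lemma rcgf_vander (a b n : ℕ) (hn : 1 ≤ n) :
    ∑ r ∈ Finset.Icc 1 n, a.choose (r - 1) * b.choose (n - r) = (a + b).choose (n - 1) := by
  rw [Nat.add_choose_eq, Finset.Nat.sum_antidiagonal_eq_sum_range_succ_mk]
  refine Finset.sum_nbij' (fun r => r - 1) (fun k => k + 1) ?_ ?_ ?_ ?_ ?_
  · intro r hr
    simp only [Finset.mem_Icc] at hr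
    simp only [Finset.mem_range]
    omega
  · intro k hk
    simp only [Finset.mem_range] at hk
    simp only [Finset.mem_Icc]
    omega
  · intro r hr; simp only [Finset.mem_Icc] at hr; omega
  · intro k hk; simp only [Finset.mem_range] at hk; omega
  · intro r hr
    simp only [Finset.mem_Icc] at hr
    dsimp only
    congr 2
    omega


noncomputable def rcgfB (s j t : ℕ) : ℚ :=
  if t = 0 then (if j = 0 then 1 else 0)
  else if t ≤ j then (t : ℚ) / (j : ℚ) * (((s - 1) * j).choose (j - t) : ℚ) else 0

private lemma rcgf_key (s t j : ℕ) (hs : 3 ≤ s) (ht : 1 ≤ t) (htj : t ≤ j) :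
    ∑ r ∈ Finset.range ((s - 1) * t + 1), (((s - 1) * t).choose r : ℚ) * rcgfB s (j - t) r
      = (t : ℚ) / (j : ℚ) * (((s - 1) * j).choose (j - t) : ℚ) := by
  have hj : 1 ≤ j := le_trans ht htj
  set a := (s - 1) * t with ha_def
  set n := j - t with hn_def
  have ha : 2 ≤ a := by
    have : 2 * 1 ≤ (s - 1) * t := Nat.mul_le_mul (by omega) ht
    omega
  rcases Nat.eq_zero_or_pos n with hn | hn
  · have htj' : t = j := by omega
    rw [Finset.sum_eq_single 0]
    · simp only [hn, rcgfB, if_pos rfl, Nat.choose_zero_right]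
      rw [htj']
      rw [div_self (by exact_mod_cast Nat.one_le_iff_ne_zero.mp hj : (j:ℚ) ≠ 0)]
      simp
    · intro r _ hr
      have : ¬ r ≤ n := by omega
      simp [rcgfB, hr, this]
    · intro h; simp at h
  · set b := (s - 1) * n with hb_def
    set N := (s - 1) * j with hN_def
    have habN : a + b = N := by
      rw [ha_def, hb_def, hN_def, ← Nat.mul_add]
      congr 1
      omega
    have hN : 1 ≤ N := by omega
    have hnq : (n : ℚ) ≠ 0 := by exact_mod_cast hn.ne'
    have hjq : (j : ℚ) ≠ 0 := by exact_mod_cast Nat.one_le_iff_ne_zero.mp hj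
    have h1 : ∑ r ∈ Finset.range (a + 1), (a.choose r : ℚ) * rcgfB s n r
        = ∑ r ∈ Finset.Icc 1 (min a n), (a.choose r : ℚ) * rcgfB s n r := by
      refine (Finset.sum_subset ?_ ?_).symm
      · intro r hr
        simp only [Finset.mem_Icc, Finset.mem_range] at *
        omega
      · intro r hr hr2
        simp only [Finset.mem_range] at hr
        simp only [Finset.mem_Icc] at hr2
        rcases eq_or_ne r 0 with rfl | hr0
        · simp [rcgfB, hn.ne']
        · have hrn : ¬ r ≤ n := by omega
          simp [rcgfB, hr0, hrn]
    have h2 : ∀ r ∈ Finset.Icc 1 (min a n), (a.choose r : ℚ) * rcgfB s n r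
        = (a : ℚ) / n * (((a - 1).choose (r - 1) : ℚ) * ((b.choose (n - r) : ℚ))) := by
      intro r hr
      simp only [Finset.mem_Icc] at hr
      have hr1 : 1 ≤ r := hr.1
      have hrn : r ≤ n := le_trans hr.2 (min_le_right _ _)
      have hc : (r : ℚ) * (a.choose r : ℚ) = (a : ℚ) * ((a - 1).choose (r - 1) : ℚ) := by
        exact_mod_cast congrArg (Nat.cast : ℕ → ℚ) (rcgf_mul_choose a r (by omega) hr1)
      rw [rcgfB, if_neg (by omega : ¬ r = 0), if_pos hrn, ← hb_def]
      field_simp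
      linear_combination ((b.choose (n - r) : ℚ)) * hc
    rw [h1, Finset.sum_congr rfl h2, ← Finset.mul_sum]
    have h3 : ∑ r ∈ Finset.Icc 1 (min a n), (((a - 1).choose (r - 1) : ℚ) * (b.choose (n - r) : ℚ))
        = ((N - 1).choose (n - 1) : ℚ) := by
      have hext : ∑ r ∈ Finset.Icc 1 (min a n), (((a - 1).choose (r - 1) : ℚ) * (b.choose (n - r) : ℚ))
          = ∑ r ∈ Finset.Icc 1 n, (((a - 1).choose (r - 1) : ℚ) * (b.choose (n - r) : ℚ)) := by
        refine Finset.sum_subset ?_ ?_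
        · intro r hr; simp only [Finset.mem_Icc] at *; omega
        · intro r hr hr2
          simp only [Finset.mem_Icc] at hr hr2
          have : a - 1 < r - 1 := by omega
          rw [Nat.choose_eq_zero_of_lt this]
          simp
      rw [hext]
      have hv := rcgf_vander (a - 1) b n hn
      have he : a - 1 + b = N - 1 := by omega
      rw [he] at hv
      exact_mod_cast congrArg (Nat.cast : ℕ → ℚ) hv
    rw [h3]
    have hc2 : (n : ℚ) * (N.choose n : ℚ) = (N : ℚ) * ((N - 1).choose (n - 1) : ℚ) := by
      exact_mod_cast congrArg (Nat.cast : ℕ → ℚ) (rcgf_mul_choose N n hN hn)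
    have haj : (a : ℚ) * (j : ℚ) = (t : ℚ) * (N : ℚ) := by
      have : a * j = t * N := by rw [ha_def, hN_def]; ring
      exact_mod_cast congrArg (Nat.cast : ℕ → ℚ) this
    field_simp
    linear_combination (((N - 1).choose (n - 1) : ℚ)) * haj - (t : ℚ) * hc2

private lemma rcgf_coeffU (s : ℕ) (hs : 3 ≤ s) (U : PowerSeries ℚ)
    (hU0 : PowerSeries.constantCoeff U = 0)
    (hU : U = PowerSeries.X * (1 + U) ^ (s - 1)) :
    ∀ j t, PowerSeries.coeff j (U ^ t) = rcgfB s j t := by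
  intro j
  induction j using Nat.strong_induction_on with
  | _ j ih =>
    intro t
    rcases Nat.eq_zero_or_pos j with rfl | hj
    · rw [PowerSeries.coeff_zero_eq_constantCoeff, map_pow, hU0]
      rcases eq_or_ne t 0 with rfl | ht <;> simp [rcgfB, *]
    · rcases eq_or_ne t 0 with rfl | ht0
      · simp [rcgfB, Nat.one_le_iff_ne_zero.mp hj, PowerSeries.coeff_one]
      · have hUt : U ^ t = (1 + U) ^ ((s - 1) * t) * PowerSeries.X ^ t := by
          conv_lhs => rw [hU]
          rw [mul_pow, ← pow_mul, mul_comm]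
        rw [hUt, PowerSeries.coeff_mul_X_pow']
        split_ifs with htj
        · have hexp : (1 + U) ^ ((s - 1) * t) = (U + 1) ^ ((s - 1) * t) := by rw [add_comm]
          rw [hexp, add_pow]
          rw [map_sum]
          have hterm : ∀ r ∈ Finset.range ((s - 1) * t + 1),
              PowerSeries.coeff (j - t) (U ^ r * 1 ^ ((s - 1) * t - r) * (((s - 1) * t).choose r : ℚ⟦X⟧))
                = (((s - 1) * t).choose r : ℚ) * rcgfB s (j - t) r := by
            intro r _
            rw [one_pow, mul_one, ← map_natCast (PowerSeries.C (R := ℚ)), PowerSeries.coeff_mul_C,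
              ih (j - t) (by omega) r, mul_comm]
          rw [Finset.sum_congr rfl hterm, rcgf_key s t j hs (Nat.one_le_iff_ne_zero.mpr ht0) htj]
          rw [rcgfB, if_neg ht0, if_pos htj]
        · rw [rcgfB, if_neg ht0, if_neg htj]

/-- Burnside/Pólya count for clusters rooted at a cell:
`F_s(x) = x·(1/s)·Σ_{d|s} φ(d)·(1 + U_s(x^d))^{s/d}` has `x^1`-coefficient `1` and,
for `k ≥ 2`, `x^k`-coefficient
`Σ_{d | gcd(s,k-1)} Σ_t [φ(d)d t/(s(k-1))]·binom(s/d, t)·binom((s-1)(k-1)/d, (k-1)/d − t)`.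
Here `U` is the unique power series with zero constant term satisfying
`U = X(1+U)^{s-1}`, and `U(x^d)` is the series whose `x^{dj}`-coefficient is the
`x^j`-coefficient of `U`. -/
theorem rooted_cluster_generating_function (s : ℕ) (hs : 3 ≤ s)
    (U : PowerSeries ℚ)
    (hU0 : PowerSeries.constantCoeff U = 0)
    (hU : U = PowerSeries.X * (1 + U) ^ (s - 1))
    (Usub : ℕ → PowerSeries ℚ)
    (hUsub : ∀ d : ℕ, Usub d = PowerSeries.mk fun j =>
      if d ∣ j then PowerSeries.coeff (j / d) U else 0)
    (F : PowerSeries ℚ)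
    (hF : F = ((1 / s : ℚ)) • (PowerSeries.X *
      ∑ d ∈ s.divisors, (Nat.totient d : ℚ) • (1 + Usub d) ^ (s / d))) :
    PowerSeries.coeff 1 F = 1 ∧
      ∀ k : ℕ, 2 ≤ k →
        PowerSeries.coeff k F
          = ∑ d ∈ (Nat.gcd s (k - 1)).divisors,
              ∑ t ∈ Finset.Icc 1 (min (s / d) ((k - 1) / d)),
                ((Nat.totient d : ℚ) * (d : ℚ) * (t : ℚ) / ((s : ℚ) * ((k - 1 : ℕ) : ℚ))) *
                  (Nat.choose (s / d) t : ℚ) *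
                  (Nat.choose ((s - 1) * ((k - 1) / d)) ((k - 1) / d - t) : ℚ) := by
  have hsne : s ≠ 0 := by omega
  have hsq : (s : ℚ) ≠ 0 := by exact_mod_cast hsne
  have hS : ∀ n : ℕ, PowerSeries.coeff (n + 1) F
      = (1 / s : ℚ) * ∑ d ∈ s.divisors,
          (d.totient : ℚ) * PowerSeries.coeff n ((1 + Usub d) ^ (s / d)) := by
    intro n
    rw [hF, map_smul, smul_eq_mul, PowerSeries.coeff_succ_X_mul, map_sum]
    simp only [map_smul, smul_eq_mul]
  constructor
  · rw [show (1 : ℕ) = 0 + 1 from rfl, hS 0]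
    have h0 : ∀ d ∈ s.divisors,
        (d.totient : ℚ) * PowerSeries.coeff 0 ((1 + Usub d) ^ (s / d)) = (d.totient : ℚ) := by
      intro d hd
      rw [PowerSeries.coeff_zero_eq_constantCoeff, map_pow, map_add, map_one, hUsub d]
      have : PowerSeries.constantCoeff
          (PowerSeries.mk fun j => if d ∣ j then PowerSeries.coeff (j / d) U else 0) = 0 := by
        rw [← PowerSeries.coeff_zero_eq_constantCoeff, PowerSeries.coeff_mk,
          if_pos (dvd_zero d), Nat.zero_div, PowerSeries.coeff_zero_eq_constantCoeff, hU0]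
      rw [this, add_zero, one_pow, mul_one]
    rw [Finset.sum_congr rfl h0, ← Nat.cast_sum, Nat.sum_totient, one_div_mul_cancel hsq]
  · intro k hk
    obtain ⟨n, rfl⟩ : ∃ n, k = n + 1 := ⟨k - 1, by omega⟩
    have hn : 1 ≤ n := by omega
    simp only [Nat.add_sub_cancel]
    rw [hS n]
    have hnq : (n : ℚ) ≠ 0 := by exact_mod_cast Nat.one_le_iff_ne_zero.mp hn
    have hco : ∀ d ∈ s.divisors, PowerSeries.coeff n ((1 + Usub d) ^ (s / d))
        = if d ∣ n then
            ∑ t ∈ Finset.Icc 1 (min (s / d) (n / d)),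
              ((t : ℚ) / ((n / d : ℕ) : ℚ)) * ((s / d).choose t : ℚ) *
                (((s - 1) * (n / d)).choose (n / d - t) : ℚ)
          else 0 := by
      intro d hd
      have hd1 : 0 < d := Nat.pos_of_mem_divisors hd
      rw [show (1 + Usub d) = (Usub d + 1) from add_comm _ _, add_pow, map_sum]
      have hterm : ∀ t ∈ Finset.range (s / d + 1),
          PowerSeries.coeff n ((Usub d) ^ t * 1 ^ (s / d - t) * (((s / d).choose t : ℕ) : ℚ⟦X⟧))
            = ((s / d).choose t : ℚ) * (if d ∣ n then rcgfB s (n / d) t else 0) := by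
        intro t _
        rw [one_pow, mul_one, ← map_natCast (PowerSeries.C (R := ℚ)), PowerSeries.coeff_mul_C,
          hUsub d, rcgf_subst_pow d hd1, PowerSeries.coeff_mk]
        split_ifs with h
        · rw [rcgf_coeffU s hs U hU0 hU (n / d) t, mul_comm]
        · simp
      rw [Finset.sum_congr rfl hterm]
      by_cases hdn : d ∣ n
      · simp only [if_pos hdn]
        have hq : 1 ≤ n / d := (Nat.one_le_div_iff hd1).mpr (Nat.le_of_dvd (by omega) hdn)
        have hstep : ∑ t ∈ Finset.range (s / d + 1), ((s / d).choose t : ℚ) * rcgfB s (n / d) t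
            = ∑ t ∈ Finset.Icc 1 (min (s / d) (n / d)), ((s / d).choose t : ℚ) * rcgfB s (n / d) t := by
          refine (Finset.sum_subset ?_ ?_).symm
          · intro r hr
            simp only [Finset.mem_Icc, Finset.mem_range] at *
            omega
          · intro r hr hr2
            simp only [Finset.mem_range] at hr
            simp only [Finset.mem_Icc] at hr2
            rcases eq_or_ne r 0 with rfl | hr0
            · simp [rcgfB, Nat.one_le_iff_ne_zero.mp hq]
            · have : ¬ r ≤ n / d := by omega
              simp [rcgfB, hr0, this]
        rw [hstep]
        refine Finset.sum_congr rfl fun t ht => ?_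
        simp only [Finset.mem_Icc] at ht
        have ht1 : t ≠ 0 := by omega
        have htq : t ≤ n / d := le_trans ht.2 (min_le_right _ _)
        rw [rcgfB, if_neg ht1, if_pos htq]
        ring
      · simp [hdn]
    rw [Finset.sum_congr rfl (fun d hd => by rw [hco d hd])]
    have hgcd0 : Nat.gcd s n ≠ 0 := by
      simp only [ne_eq, Nat.gcd_eq_zero_iff]
      omega
    have hsub : (Nat.gcd s n).divisors ⊆ s.divisors :=
      Nat.divisors_subset_of_dvd hsne (Nat.gcd_dvd_left s n)
    have hvanish : ∀ d ∈ s.divisors, d ∉ (Nat.gcd s n).divisors →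
        (d.totient : ℚ) * (if d ∣ n then
            ∑ t ∈ Finset.Icc 1 (min (s / d) (n / d)),
              ((t : ℚ) / ((n / d : ℕ) : ℚ)) * ((s / d).choose t : ℚ) *
                (((s - 1) * (n / d)).choose (n / d - t) : ℚ)
          else 0) = 0 := by
      intro d hd hd2
      rw [if_neg, mul_zero]
      intro hdn
      exact hd2 (Nat.mem_divisors.mpr ⟨Nat.dvd_gcd (Nat.mem_divisors.mp hd).1 hdn, hgcd0⟩)
    rw [← Finset.sum_subset hsub hvanish, Finset.mul_sum]
    refine Finset.sum_congr rfl fun d hd => ?_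
    have hd_mem : d ∣ Nat.gcd s n := (Nat.mem_divisors.mp hd).1
    have hdn : d ∣ n := hd_mem.trans (Nat.gcd_dvd_right s n)
    have hd1 : 0 < d := Nat.pos_of_mem_divisors (hsub hd)
    have hq : 1 ≤ n / d := (Nat.one_le_div_iff hd1).mpr (Nat.le_of_dvd (by omega) hdn)
    have hndq : ((n / d : ℕ) : ℚ) ≠ 0 := by exact_mod_cast Nat.one_le_iff_ne_zero.mp hq
    have hnd : ((n / d : ℕ) : ℚ) * (d : ℚ) = (n : ℚ) := by
      exact_mod_cast congrArg (Nat.cast : ℕ → ℚ) (Nat.div_mul_cancel hdn)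
    have hdq : (d : ℚ) ≠ 0 := by exact_mod_cast Nat.one_le_iff_ne_zero.mp hd1
    rw [if_pos hdn, Finset.mul_sum, Finset.mul_sum]
    refine Finset.sum_congr rfl fun t ht => ?_
    field_simp
    ring_nf
    linear_combination (-((t : ℚ) * ((s / d).choose t : ℚ) * (((s - 1) * (n / d)).choose (n / d - t) : ℚ))) * hnd
end

section
/- For integers s ≥ 3 and k ≥ 1, the quantity Σ_{d | gcd(s,k-1)} Σ_{t=1}^{min(s/d,(k-1)/d)} [φ(d)·d·t/(s(k-1))]·binom(s/d, t)·binom((s-1)(k-1)/d, (k-1)/d − t) is a nonnegative integer (for k ≥ 2; for k = 1 the count is 1). -/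
open Pointwise Finset

lemma card_fixed_finsets {G : Type*} [AddCommGroup G] [Fintype G] [DecidableEq G]
    (g : G) (m : ℕ) :
    (Finset.univ.filter fun A : Finset G => A.card = m ∧ g +ᵥ A = A).card
      = if addOrderOf g ∣ m then (Fintype.card G / addOrderOf g).choose (m / addOrderOf g)
        else 0 := by
  classical
  set H := AddSubgroup.zmultiples g with hH
  set e := addOrderOf g with he'
  have he : 0 < e := addOrderOf_pos g
  letI : Fintype (G ⧸ H) := Fintype.ofFinite _
  letI : DecidableEq (G ⧸ H) := Classical.decEq _
  have hcardH : Nat.card H = e := Nat.card_zmultiples g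
  have hGQ : Fintype.card G = Fintype.card (G ⧸ H) * e := by
    have := AddSubgroup.card_eq_card_quotient_mul_card_addSubgroup (s := H)
    rw [hcardH, Nat.card_eq_fintype_card, Nat.card_eq_fintype_card] at this
    exact this
  have hcardQ : Fintype.card (G ⧸ H) = Fintype.card G / e := by
    rw [hGQ, Nat.mul_div_cancel _ he]
  -- fibers of the quotient map have cardinality e
  have hfiber : ∀ q : G ⧸ H,
      (Finset.univ.filter fun a : G => (QuotientAddGroup.mk a : G ⧸ H) = q).card = e := by
    intro q
    have h1 : Nat.card (QuotientAddGroup.mk ⁻¹' ({q} : Set (G ⧸ H))) = e := by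
      rw [Nat.card_congr (QuotientAddGroup.preimageMkEquivAddSubgroupProdSet H {q}),
        Nat.card_prod, hcardH]
      simp
    rw [← Fintype.card_subtype, ← Nat.card_eq_fintype_card]
    exact (Nat.card_congr (Equiv.subtypeEquivRight (fun a => by simp))).trans h1
  -- invariance transfer
  have hinv : ∀ A : Finset G, g +ᵥ A = A → ∀ a b : G,
      (QuotientAddGroup.mk a : G ⧸ H) = QuotientAddGroup.mk b → (a ∈ A ↔ b ∈ A) := by
    intro A hA a b hab
    have hstab : ∀ h' ∈ H, h' +ᵥ A = A := by
      intro h' hh'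
      have : H ≤ AddAction.stabilizer G A := by rw [hH, AddSubgroup.zmultiples_le]; exact hA
      exact this hh'
    have hmem : -a + b ∈ H := QuotientAddGroup.eq.mp hab
    have hb : (-a + b) +ᵥ a = b := by simp [vadd_eq_add]
    constructor
    · intro ha
      have h2 : (-a + b) +ᵥ a ∈ (-a + b) +ᵥ A := Finset.vadd_mem_vadd_finset ha
      rw [hstab _ hmem, hb] at h2
      exact h2
    · intro hbA
      rw [← hstab _ hmem] at hbA
      rcases Finset.mem_vadd_finset.mp hbA with ⟨c, hc, hc2⟩
      have h4 : (-a + b) + c = b := hc2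
      have : c = a := by
        have := add_left_cancel (a := -a + b) (b := c) (c := a) (by rw [h4]; abel)
        exact this
      rwa [← this]
  -- bijection with finsets of the quotient
  have hbij : (Finset.univ.filter fun A : Finset G => A.card = m ∧ g +ᵥ A = A).card
      = (Finset.univ.filter fun B : Finset (G ⧸ H) => B.card * e = m).card := by
    refine Finset.card_bij (β := Finset (G ⧸ H))
      (t := Finset.univ.filter fun B : Finset (G ⧸ H) => B.card * e = m)
      (fun (A : Finset G) _ => A.image (QuotientAddGroup.mk : G → G ⧸ H)) ?_ ?_ ?_
    · intro A hA
      simp only [Finset.mem_filter, Finset.mem_univ, true_and] at hA ⊢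
      obtain ⟨hcard, hfix⟩ := hA
      have hsum : A.card = ∑ q ∈ A.image (QuotientAddGroup.mk : G → G ⧸ H),
          (A.filter fun a => QuotientAddGroup.mk a = q).card :=
        Finset.card_eq_sum_card_fiberwise (fun a ha => Finset.mem_image_of_mem _ ha)
      have hconst : ∀ q ∈ A.image (QuotientAddGroup.mk : G → G ⧸ H),
          (A.filter fun a => QuotientAddGroup.mk a = q).card = e := by
        intro q hq
        rcases Finset.mem_image.mp hq with ⟨b, hb, rfl⟩
        have heq : A.filter (fun a => (QuotientAddGroup.mk a : G ⧸ H) = QuotientAddGroup.mk b)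
            = Finset.univ.filter fun a =>
              (QuotientAddGroup.mk a : G ⧸ H) = QuotientAddGroup.mk b := by
          ext x
          simp only [Finset.mem_filter, Finset.mem_univ, true_and, and_iff_right_iff_imp]
          intro hx
          exact (hinv A hfix x b hx).mpr hb
        rw [heq, hfiber]
      rw [← hcard, hsum, Finset.sum_congr rfl hconst, Finset.sum_const, smul_eq_mul]
    · intro A₁ h₁ A₂ h₂ himg
      simp only [Finset.mem_filter, Finset.mem_univ, true_and] at h₁ h₂
      have key : ∀ (A A' : Finset G), g +ᵥ A' = A' →
          A.image (QuotientAddGroup.mk : G → G ⧸ H) = A'.image (QuotientAddGroup.mk : G → G ⧸ H) →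
          ∀ a ∈ A, a ∈ A' := by
        intro A A' hA' himg a ha
        have : (QuotientAddGroup.mk a : G ⧸ H) ∈ A'.image (QuotientAddGroup.mk : G → G ⧸ H) := by
          rw [← himg]; exact Finset.mem_image_of_mem _ ha
        rcases Finset.mem_image.mp this with ⟨b, hb, hba⟩
        exact (hinv A' hA' a b hba.symm).mpr hb
      ext a
      exact ⟨key A₁ A₂ h₂.2 himg a, key A₂ A₁ h₁.2 himg.symm a⟩
    · intro B hB
      simp only [Finset.mem_filter, Finset.mem_univ, true_and] at hB
      refine ⟨Finset.univ.filter fun a => (QuotientAddGroup.mk a : G ⧸ H) ∈ B, ?_, ?_⟩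
      · simp only [Finset.mem_filter, Finset.mem_univ, true_and]
        have hfix : g +ᵥ (Finset.univ.filter fun a => (QuotientAddGroup.mk a : G ⧸ H) ∈ B)
            = Finset.univ.filter fun a => (QuotientAddGroup.mk a : G ⧸ H) ∈ B := by
          have hgH : g ∈ H := AddSubgroup.mem_zmultiples g
          ext x
          rw [Finset.mem_vadd_finset]
          simp only [Finset.mem_filter, Finset.mem_univ, true_and]
          constructor
          · rintro ⟨y, hy, rfl⟩
            have : (QuotientAddGroup.mk (g +ᵥ y) : G ⧸ H) = QuotientAddGroup.mk y := by
              rw [QuotientAddGroup.eq]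
              simpa [vadd_eq_add] using H.neg_mem hgH
            rwa [this]
          · intro hx
            refine ⟨-g + x, ?_, by simp [vadd_eq_add]⟩
            have : (QuotientAddGroup.mk (-g + x) : G ⧸ H) = QuotientAddGroup.mk x := by
              rw [QuotientAddGroup.eq]
              simpa using hgH
            rwa [this]
        refine ⟨?_, hfix⟩
        have hsum : (Finset.univ.filter fun a => (QuotientAddGroup.mk a : G ⧸ H) ∈ B).card
            = ∑ q ∈ B, ((Finset.univ.filter fun a =>
                (QuotientAddGroup.mk a : G ⧸ H) ∈ B).filter
                  fun a => QuotientAddGroup.mk a = q).card :=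
          Finset.card_eq_sum_card_fiberwise (fun a ha => (Finset.mem_filter.mp ha).2)
        have hconst : ∀ q ∈ B, ((Finset.univ.filter fun a =>
            (QuotientAddGroup.mk a : G ⧸ H) ∈ B).filter
              fun a => QuotientAddGroup.mk a = q).card = e := by
          intro q hq
          have heq : ((Finset.univ.filter fun a =>
              (QuotientAddGroup.mk a : G ⧸ H) ∈ B).filter
                fun a => QuotientAddGroup.mk a = q)
              = Finset.univ.filter fun a => (QuotientAddGroup.mk a : G ⧸ H) = q := by
            ext x
            simp only [Finset.mem_filter, Finset.mem_univ, true_and]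
            constructor
            · exact fun h => h.2
            · exact fun h => ⟨h ▸ hq, h⟩
          rw [heq, hfiber]
        rw [hsum, Finset.sum_congr rfl hconst, Finset.sum_const, smul_eq_mul, hB]
      · ext q
        simp only [Finset.mem_image, Finset.mem_filter, Finset.mem_univ, true_and]
        constructor
        · rintro ⟨a, ha, rfl⟩; exact ha
        · intro hq
          rcases QuotientAddGroup.mk_surjective q with ⟨a, rfl⟩
          exact ⟨a, hq, rfl⟩
  rw [hbij]
  by_cases hdvd : e ∣ m
  · rw [if_pos hdvd]
    have hset : (Finset.univ.filter fun B : Finset (G ⧸ H) => B.card * e = m)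
        = Finset.univ.filter fun B : Finset (G ⧸ H) => B.card = m / e := by
      ext B
      simp only [Finset.mem_filter, Finset.mem_univ, true_and]
      obtain ⟨c, rfl⟩ := hdvd
      rw [Nat.mul_div_cancel_left _ he, mul_comm]
      exact ⟨fun h => Nat.eq_of_mul_eq_mul_left he h, fun h => by rw [h]⟩
    rw [hset, ← hcardQ, ← Fintype.card_finset_len, Fintype.card_subtype]
  · rw [if_neg hdvd]
    rw [Finset.card_eq_zero, Finset.filter_eq_empty_iff]
    intro B _ hcon
    exact hdvd ⟨B.card, by rw [← hcon, mul_comm]⟩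

open Pointwise in
instance necklaceAddAction {G : Type*} [AddGroup G] [DecidableEq G] (m : ℕ) :
    AddAction G {A : Finset G // A.card = m} where
  vadd := fun g A => ⟨g +ᵥ A.1, by rw [Finset.card_vadd_finset]; exact A.2⟩
  zero_vadd := fun A => Subtype.ext (zero_vadd _ _)
  add_vadd := fun g h A => Subtype.ext (add_vadd g h A.1)

theorem necklace_dvd (n m : ℕ) (hn : 0 < n) :
    n ∣ ∑ e ∈ n.divisors,
      Nat.totient e * (if e ∣ m then (n / e).choose (m / e) else 0) := by
  classical
  haveI : NeZero n := ⟨hn.ne'⟩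
  set β := {A : Finset (ZMod n) // A.card = m}
  letI : ∀ g : ZMod n, Fintype (AddAction.fixedBy β g) := fun g => Fintype.ofFinite _
  letI : Fintype (AddAction.orbitRel.Quotient (ZMod n) β) := Fintype.ofFinite _
  have hburn := AddAction.sum_card_fixedBy_eq_card_orbits_mul_card_addGroup (ZMod n) β
  have hfix : ∀ g : ZMod n, Fintype.card (AddAction.fixedBy β g)
      = if addOrderOf g ∣ m then (n / addOrderOf g).choose (m / addOrderOf g) else 0 := by
    intro g
    have e1 : AddAction.fixedBy β g ≃ {A : Finset (ZMod n) // A.card = m ∧ g +ᵥ A = A} := by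
      refine Equiv.trans (Equiv.subtypeEquivRight (q := fun A : β => g +ᵥ A.1 = A.1) ?_) ?_
      · intro A
        rw [AddAction.mem_fixedBy]
        exact ⟨fun h => by exact congrArg Subtype.val h, fun h => by exact Subtype.ext h⟩
      · exact Equiv.subtypeSubtypeEquivSubtypeInter
          (p := fun A : Finset (ZMod n) => A.card = m) (q := fun A => g +ᵥ A = A)
    rw [Fintype.card_congr e1, Fintype.card_subtype, card_fixed_finsets, ZMod.card]
  have hsum : ∑ g : ZMod n, Fintype.card (AddAction.fixedBy β g)
      = ∑ e ∈ n.divisors,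
        Nat.totient e * (if e ∣ m then (n / e).choose (m / e) else 0) := by
    rw [← Finset.sum_fiberwise_of_maps_to (g := fun g : ZMod n => addOrderOf g)
      (t := n.divisors) (fun g _ => Nat.mem_divisors.mpr ⟨by
        simpa [ZMod.card] using addOrderOf_dvd_card (x := g), hn.ne'⟩)]
    refine Finset.sum_congr rfl fun e he => ?_
    have hcount : (Finset.univ.filter fun g : ZMod n => addOrderOf g = e).card
        = Nat.totient e := by
      have := IsAddCyclic.card_addOrderOf_eq_totient (α := ZMod n)
        (d := e) (by simpa [ZMod.card] using (Nat.mem_divisors.mp he).1)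
      simpa using this
    calc ∑ g ∈ Finset.univ.filter fun g : ZMod n => addOrderOf g = e,
          Fintype.card (AddAction.fixedBy β g)
        = ∑ g ∈ Finset.univ.filter fun g : ZMod n => addOrderOf g = e,
          (if e ∣ m then (n / e).choose (m / e) else 0) := by
          refine Finset.sum_congr rfl fun g hg => ?_
          rw [hfix g, (Finset.mem_filter.mp hg).2]
      _ = _ := by rw [Finset.sum_const, hcount, smul_eq_mul]
  rw [hsum, ZMod.card] at hburn
  exact ⟨_, hburn.trans (mul_comm _ _)⟩


lemma inner_nat (a b c : ℕ) (ha : 0 < a) (hb : 0 < b) :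
    ∑ t ∈ Finset.Icc 1 (min a b), t * (a.choose t * c.choose (b - t))
      = a * (a - 1 + c).choose (b - 1) := by
  have h1 : ∑ t ∈ Finset.Icc 1 (min a b), t * (a.choose t * c.choose (b - t))
      = ∑ t ∈ Finset.range (b + 1), t * (a.choose t * c.choose (b - t)) := by
    apply Finset.sum_subset
    · intro x hx
      simp only [Finset.mem_Icc, Finset.mem_range] at hx ⊢
      omega
    · intro x hx hnot
      simp only [Finset.mem_Icc, Finset.mem_range, not_and, not_le] at hx hnot
      rcases Nat.eq_zero_or_pos x with rfl | hxpos
      · simp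
      · have : a < x := by
          have := hnot hxpos
          omega
        rw [Nat.choose_eq_zero_of_lt this]
        simp
  rw [h1, Finset.sum_range_succ']
  simp only [Nat.zero_mul, add_zero]
  have key : ∀ i, (i + 1) * (a.choose (i + 1) * c.choose (b - (i + 1)))
      = a * ((a - 1).choose i * c.choose (b - 1 - i)) := by
    intro i
    have h2 : (i + 1) * a.choose (i + 1) = a * (a - 1).choose i := by
      have h3 := Nat.add_one_mul_choose_eq (a - 1) i
      have h4 : a - 1 + 1 = a := by omega
      simp only [Nat.succ_eq_add_one, h4] at h3
      rw [mul_comm]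
      exact h3.symm
    have h5 : b - (i + 1) = b - 1 - i := by omega
    rw [h5, ← mul_assoc, h2, mul_assoc]
  rw [Finset.sum_congr rfl fun i _ => key i, ← Finset.mul_sum]
  congr 1
  rw [Nat.add_choose_eq, Finset.Nat.sum_antidiagonal_eq_sum_range_succ_mk]
  have hb1 : (b - 1).succ = b := by omega
  rw [hb1]


lemma term_eq (d a b c N : ℕ) (hd : 0 < d) (ha : 0 < a) (hb : 0 < b) :
    ((N : ℚ) * d / ((d * a : ℕ) * (d * b : ℕ))) * ((a * (a - 1 + c).choose (b - 1) : ℕ) : ℚ)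
      = ((N * (a + c).choose b : ℕ) : ℚ) / ((d * (a + c) : ℕ) : ℚ) := by
  have hkey : (a + c) * (a - 1 + c).choose (b - 1) = (a + c).choose b * b := by
    have h := Nat.add_one_mul_choose_eq (a + c - 1) (b - 1)
    have h1 : a + c - 1 + 1 = a + c := by omega
    have h2 : b - 1 + 1 = b := by omega
    rw [h1, h2] at h
    rw [show a - 1 + c = a + c - 1 by omega]
    exact h
  have hac : 0 < a + c := by omega
  have hkeyQ : ((a : ℚ) + c) * ((a - 1 + c).choose (b - 1) : ℕ)
      = (((a + c).choose b : ℕ) : ℚ) * b := by exact_mod_cast hkey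
  push_cast
  rw [div_mul_eq_mul_div, div_eq_div_iff (by positivity) (by positivity)]
  push_cast
  linear_combination ((N : ℚ) * d * d * a) * hkeyQ

/-- The Pólya-type count of `s`-gon dissections with `k` cells rooted at a cell, up to
rotation of the root cell, is a nonnegative integer. -/
theorem rooted_cluster_count_integer (s k : ℕ) (hs : 3 ≤ s) (hk : 2 ≤ k) :
    ∃ N : ℕ,
      ∑ d ∈ (Nat.gcd s (k - 1)).divisors,
        ∑ t ∈ Finset.Icc 1 (min (s / d) ((k - 1) / d)),
          ((Nat.totient d : ℚ) * (d : ℚ) * (t : ℚ) / ((s : ℚ) * ((k - 1 : ℕ) : ℚ))) *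
            (Nat.choose (s / d) t : ℚ) *
            (Nat.choose ((s - 1) * ((k - 1) / d)) ((k - 1) / d - t) : ℚ) = (N : ℚ) := by
  classical
  set m := k - 1 with hm
  have hm1 : 1 ≤ m := by omega
  set n := s + (s - 1) * m with hn
  have hn0 : 0 < n := by
    have h1 : 0 < s := by omega
    calc 0 < s := h1
    _ ≤ n := by rw [hn]; exact Nat.le_add_right _ _
  have hgcd : Nat.gcd n m = Nat.gcd s m := by
    rw [hn]; exact Nat.gcd_add_mul_right_left m s (s - 1)
  have hdvd := necklace_dvd n m hn0
  have hsum_eq : (∑ e ∈ n.divisors,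
        Nat.totient e * (if e ∣ m then (n / e).choose (m / e) else 0))
      = ∑ e ∈ (Nat.gcd n m).divisors, Nat.totient e * (n / e).choose (m / e) := by
    simp_rw [mul_ite, mul_zero, Finset.sum_ite, Finset.sum_const_zero, add_zero]
    apply Finset.sum_congr _ fun _ _ => rfl
    ext e
    simp only [Finset.mem_filter, Nat.mem_divisors]
    constructor
    · rintro ⟨⟨h1, h2⟩, h3⟩
      exact ⟨Nat.dvd_gcd h1 h3, by simp [Nat.gcd_eq_zero_iff, hn0.ne']⟩
    · rintro ⟨h1, h2⟩
      exact ⟨⟨h1.trans (Nat.gcd_dvd_left _ _), hn0.ne'⟩, h1.trans (Nat.gcd_dvd_right _ _)⟩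
  rw [hsum_eq, hgcd] at hdvd
  obtain ⟨N, hN⟩ := hdvd
  refine ⟨N, ?_⟩
  have hstep : ∀ d ∈ (Nat.gcd s m).divisors,
      (∑ t ∈ Finset.Icc 1 (min (s / d) (m / d)),
        ((Nat.totient d : ℚ) * (d : ℚ) * (t : ℚ) / ((s : ℚ) * (m : ℚ))) *
          (Nat.choose (s / d) t : ℚ) *
          (Nat.choose ((s - 1) * (m / d)) (m / d - t) : ℚ))
      = ((Nat.totient d * (n / d).choose (m / d) : ℕ) : ℚ) / ((n : ℕ) : ℚ) := by
    intro d hd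
    rw [Nat.mem_divisors] at hd
    have hds : d ∣ s := hd.1.trans (Nat.gcd_dvd_left _ _)
    have hdm : d ∣ m := hd.1.trans (Nat.gcd_dvd_right _ _)
    have hd0 : 0 < d := Nat.pos_of_dvd_of_pos hds (by omega)
    set a := s / d with ha'
    set b := m / d with hb'
    set c := (s - 1) * b with hc'
    have ha : 0 < a := Nat.div_pos (Nat.le_of_dvd (by omega) hds) hd0
    have hb : 0 < b := Nat.div_pos (Nat.le_of_dvd (by omega) hdm) hd0
    have hsa : s = d * a := (Nat.mul_div_cancel' hds).symm
    have hmb : m = d * b := (Nat.mul_div_cancel' hdm).symm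
    have hnac : n = d * (a + c) := by
      rw [hn, hc', Nat.mul_add, ← hsa]
      congr 1
      rw [hmb]; ring
    have hnd : n / d = a + c := by rw [hnac, Nat.mul_div_cancel_left _ hd0]
    have htrans : ∀ t : ℕ,
        ((Nat.totient d : ℚ) * (d : ℚ) * (t : ℚ) / ((s : ℚ) * (m : ℚ))) *
          (Nat.choose a t : ℚ) * (Nat.choose c (b - t) : ℚ)
        = ((Nat.totient d : ℚ) * (d : ℚ) / ((s : ℚ) * (m : ℚ))) *
          ((t * (Nat.choose a t * Nat.choose c (b - t)) : ℕ) : ℚ) := by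
      intro t
      push_cast
      ring
    calc (∑ t ∈ Finset.Icc 1 (min a b),
          ((Nat.totient d : ℚ) * (d : ℚ) * (t : ℚ) / ((s : ℚ) * (m : ℚ))) *
            (Nat.choose a t : ℚ) * (Nat.choose c (b - t) : ℚ))
        = ((Nat.totient d : ℚ) * (d : ℚ) / ((s : ℚ) * (m : ℚ))) *
          ((∑ t ∈ Finset.Icc 1 (min a b),
            t * (Nat.choose a t * Nat.choose c (b - t)) : ℕ) : ℚ) := by
          rw [Nat.cast_sum, Finset.mul_sum]
          exact Finset.sum_congr rfl fun t _ => htrans t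
      _ = ((Nat.totient d : ℚ) * (d : ℚ) / ((s : ℚ) * (m : ℚ))) *
          ((a * (a - 1 + c).choose (b - 1) : ℕ) : ℚ) := by
          rw [inner_nat a b c ha hb]
      _ = ((Nat.totient d * (n / d).choose (m / d) : ℕ) : ℚ) / ((n : ℕ) : ℚ) := by
          rw [hnd, ← hb']
          have := term_eq d a b c (Nat.totient d) hd0 ha hb
          rw [← hsa, ← hmb] at this
          rw [this, hnac]
  rw [Finset.sum_congr rfl hstep, ← Finset.sum_div, ← Nat.cast_sum, hN]
  push_cast
  rw [mul_comm]
  rw [mul_div_assoc, div_self (by exact_mod_cast hn0.ne'), mul_one]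
end

section
/- In any (m+2)-angulation of an (nm+2)-gon, at most one m-diagonal divides the polygon into two parts containing equal numbers of m-diagonals of the angulation. -/
lemma aux_nested (Δ : Finset (ℕ × ℕ)) (α β : ℕ × ℕ) (hβ : β ∈ Δ) (hne : α ≠ β)
    (h1 : α.1 ≤ β.1) (h2 : β.2 ≤ α.2)
    (hαsplit : 2 * ((Δ.erase α).filter (fun γ => α.1 ≤ γ.1 ∧ γ.2 ≤ α.2)).card = Δ.card - 1)
    (hβsplit : 2 * ((Δ.erase β).filter (fun γ => β.1 ≤ γ.1 ∧ γ.2 ≤ β.2)).card = Δ.card - 1) :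
    False := by
  set Sα := (Δ.erase α).filter (fun γ => α.1 ≤ γ.1 ∧ γ.2 ≤ α.2) with hSα
  set Sβ := (Δ.erase β).filter (fun γ => β.1 ≤ γ.1 ∧ γ.2 ≤ β.2) with hSβ
  have hβSα : β ∈ Sα := by
    rw [hSα, Finset.mem_filter, Finset.mem_erase]
    exact ⟨⟨fun h => hne h.symm, hβ⟩, h1, h2⟩
  have hsub : insert β Sβ ⊆ Sα := by
    intro γ hγ
    rcases Finset.mem_insert.mp hγ with rfl | hγ
    · exact hβSα
    · rw [hSβ, Finset.mem_filter, Finset.mem_erase] at hγ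
      obtain ⟨⟨hγβ, hγΔ⟩, hg1, hg2⟩ := hγ
      rw [hSα, Finset.mem_filter, Finset.mem_erase]
      refine ⟨⟨?_, hγΔ⟩, le_trans h1 hg1, le_trans hg2 h2⟩
      rintro rfl
      exact hne (Prod.ext (le_antisymm h1 hg1) (le_antisymm hg2 h2))
  have hβnot : β ∉ Sβ := by
    rw [hSβ, Finset.mem_filter, Finset.mem_erase]
    tauto
  have hcard := Finset.card_le_card hsub
  rw [Finset.card_insert_of_notMem hβnot] at hcard
  omega

lemma aux_disjoint (Δ : Finset (ℕ × ℕ)) (α β : ℕ × ℕ) (hα : α ∈ Δ) (hβ : β ∈ Δ)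
    (hne : α ≠ β) (hlt : ∀ γ ∈ Δ, γ.1 < γ.2) (hd : α.2 ≤ β.1)
    (hαsplit : 2 * ((Δ.erase α).filter (fun γ => α.1 ≤ γ.1 ∧ γ.2 ≤ α.2)).card = Δ.card - 1)
    (hβsplit : 2 * ((Δ.erase β).filter (fun γ => β.1 ≤ γ.1 ∧ γ.2 ≤ β.2)).card = Δ.card - 1) :
    False := by
  set Sα := (Δ.erase α).filter (fun γ => α.1 ≤ γ.1 ∧ γ.2 ≤ α.2) with hSα
  set Sβ := (Δ.erase β).filter (fun γ => β.1 ≤ γ.1 ∧ γ.2 ≤ β.2) with hSβ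
  have hdisj : Disjoint Sα Sβ := by
    rw [Finset.disjoint_left]
    intro γ hγa hγb
    rw [hSα, Finset.mem_filter, Finset.mem_erase] at hγa
    rw [hSβ, Finset.mem_filter, Finset.mem_erase] at hγb
    have := hlt γ hγa.1.2
    omega
  have hsub : Sα ∪ Sβ ⊆ (Δ.erase α).erase β := by
    intro γ hγ
    rcases Finset.mem_union.mp hγ with hγ | hγ
    · rw [hSα, Finset.mem_filter, Finset.mem_erase] at hγ
      rw [Finset.mem_erase, Finset.mem_erase]
      have hβlt := hlt β hβ
      refine ⟨?_, hγ.1⟩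
      rintro rfl
      omega
    · rw [hSβ, Finset.mem_filter, Finset.mem_erase] at hγ
      rw [Finset.mem_erase, Finset.mem_erase]
      have hαlt := hlt α hα
      refine ⟨hγ.1.1, ?_, hγ.1.2⟩
      rintro rfl
      omega
  have hcard := Finset.card_le_card hsub
  rw [Finset.card_union_of_disjoint hdisj] at hcard
  have hβe : β ∈ Δ.erase α := Finset.mem_erase.mpr ⟨fun h => hne h.symm, hβ⟩
  rw [Finset.card_erase_of_mem hβe, Finset.card_erase_of_mem hα] at hcard
  have : 1 ≤ Δ.card := Finset.card_pos.mpr ⟨α, hα⟩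
  have : 2 ≤ Δ.card := Finset.one_lt_card.mpr ⟨α, hα, β, hβ, hne⟩
  omega

/-- In any `(m+2)`-angulation of an `(nm+2)`-gon, at most one m-diagonal divides the
polygon into two parts containing equally many of the remaining diagonals. -/
theorem at_most_one_equal_split (n m : ℕ) (hn : 2 ≤ n) (hm : 1 ≤ m)
    (Δ : Finset (ℕ × ℕ)) (hΔ : IsAngulation n m Δ)
    (α β : ℕ × ℕ) (hα : α ∈ Δ) (hβ : β ∈ Δ)
    (hαsplit : 2 * ((Δ.erase α).filter (fun γ => α.1 ≤ γ.1 ∧ γ.2 ≤ α.2)).card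
        = Δ.card - 1)
    (hβsplit : 2 * ((Δ.erase β).filter (fun γ => β.1 ≤ γ.1 ∧ γ.2 ≤ β.2)).card
        = Δ.card - 1) :
    α = β := by
  obtain ⟨hdiag, hnc, -⟩ := hΔ
  have hlt : ∀ γ ∈ Δ, γ.1 < γ.2 := fun γ hγ => (hdiag γ hγ).2.1
  by_contra hne
  have hab := hnc α hα β hβ
  have hα12 := hlt α hα
  have hβ12 := hlt β hβ
  have hcases : (α.1 ≤ β.1 ∧ β.2 ≤ α.2) ∨ (β.1 ≤ α.1 ∧ α.2 ≤ β.2) ∨ α.2 ≤ β.1 ∨ β.2 ≤ α.1 := by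
    unfold Crosses at hab
    omega
  rcases hcases with ⟨h1, h2⟩ | ⟨h1, h2⟩ | hd | hd
  · exact aux_nested Δ α β hβ hne h1 h2 hαsplit hβsplit
  · exact aux_nested Δ β α hα (Ne.symm hne) h1 h2 hβsplit hαsplit
  · exact aux_disjoint Δ α β hα hβ hne hlt hd hαsplit hβsplit
  · exact aux_disjoint Δ β α hβ hα (Ne.symm hne) hlt hd hβsplit hαsplit
end

section
/- For positive integers n and m with n ≥ 2, removing from an (m+2)-angulation Δ of the (nm+2)-gon an m-diagonal α that is close to the border yields, after deleting the m extra boundary vertices, an (m+2)-angulation of the ((n−1)m+2)-gon with n−2 diagonals. -/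
/-- `β` lies (weakly) in the part of the polygon cut off by `α` between its endpoints. -/
def WeaklyInside (α β : ℕ × ℕ) : Prop := α.1 ≤ β.1 ∧ β.2 ≤ α.2

/-- `β` lies (weakly) in the part of the polygon on the other side of `α`. -/
def WeaklyOutside (α β : ℕ × ℕ) : Prop :=
  β.2 ≤ α.1 ∨ α.2 ≤ β.1 ∨ (β.1 ≤ α.1 ∧ α.2 ≤ β.2)

/-- An m-diagonal `α` of an `(m+2)`-angulation `Δ` of the `(nm+2)`-gon is *close to the
border* if one of the two parts it cuts off is an `(m+2)`-gon (has `m+2` sides) and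
contains no other diagonal of `Δ`; then all other sides of that `(m+2)`-gon are boundary
edges of the polygon. -/
def CloseToBorder (n m : ℕ) (Δ : Finset (ℕ × ℕ)) (α : ℕ × ℕ) : Prop :=
  α ∈ Δ ∧
    ((α.2 = α.1 + (m + 1) ∧ ∀ β ∈ Δ, β ≠ α → ¬ WeaklyInside α β) ∨
      (α.1 + (n * m + 2) = α.2 + (m + 1) ∧ ∀ β ∈ Δ, β ≠ α → ¬ WeaklyOutside α β))

/-- The result of removing from `Δ` a diagonal `α` close to the border: the
`(m+2)`-gon cut off by `α` is removed, its `m` extra boundary vertices are deleted,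
and the remaining vertices are relabeled `1,…,(n-1)m+2`. -/
def reduceAt (m : ℕ) (Δ : Finset (ℕ × ℕ)) (α : ℕ × ℕ) : Finset (ℕ × ℕ) :=
  if α.2 = α.1 + (m + 1) then
    (Δ.erase α).image fun β =>
      ((if α.1 < β.1 then β.1 - m else β.1), (if α.1 < β.2 then β.2 - m else β.2))
  else
    (Δ.erase α).image fun β => (β.1 - α.1 + 1, β.2 - α.1 + 1)


lemma le_mul' {k m : ℕ} (hk : 1 ≤ k) : m ≤ k * m :=
  le_mul_of_one_le_left (Nat.zero_le m) hk

lemma k_lt' {k n m : ℕ} (hm : 1 ≤ m) (h : k * m + 1 ≤ n * m) : k < n := by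
  by_contra hc
  push_neg at hc
  have := Nat.mul_le_mul hc (le_refl m)
  omega

lemma succ_mul' (k m : ℕ) (hk : 1 ≤ k) : (k - 1) * m + m = k * m := by
  have h : k - 1 + 1 = k := by omega
  calc (k-1)*m + m = (k-1+1)*m := by rw [Nat.add_mul, one_mul]
    _ = k*m := by rw [h]

lemma mdiag_char {n m : ℕ} (hm : 1 ≤ m) (c : ℕ × ℕ) :
    IsMDiagonal n m c ↔
      1 ≤ c.1 ∧ c.1 + 2 ≤ c.2 ∧ c.2 ≤ n * m + 2 ∧ c.2 - c.1 ≤ n * m ∧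
        ∃ k, 1 ≤ k ∧ c.2 - c.1 = k * m + 1 := by
  unfold IsMDiagonal
  constructor
  · rintro ⟨h1, h2, h3, h4, h5, h6, h7⟩
    refine ⟨h1, by omega, h3, h5, ?_⟩
    have hmod : c.2 - c.1 ≡ 1 [MOD m] :=
      Nat.ModEq.add_right_cancel' 1 (h6 : c.2 - c.1 + 1 ≡ 2 [MOD m])
    have hdvd : m ∣ (c.2 - c.1 - 1) := (Nat.modEq_iff_dvd' (by omega)).1 hmod.symm
    obtain ⟨k, hkk⟩ := hdvd
    rcases Nat.eq_zero_or_pos k with rfl | hkpos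
    · omega
    · exact ⟨k, hkpos, by have := Nat.mul_comm m k; omega⟩
  · rintro ⟨h1, h2, h3, h4, k, hk, hks⟩
    have hkm := le_mul' (m := m) hk
    have hkn : k < n := k_lt' hm (by omega)
    have hsub : (n-k)*m + k*m = n*m := by
      rw [← Nat.add_mul, Nat.sub_add_cancel hkn.le]
    have he1 : c.2 - c.1 + 1 = 2 + k*m := by omega
    have he2 : n*m+2 - (c.2 - c.1) + 1 = 2 + (n-k)*m := by omega
    exact ⟨h1, by omega, h3, by omega, h4, by rw [he1, Nat.add_mul_mod_self_right],
      by rw [he2, Nat.add_mul_mod_self_right]⟩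
lemma inner_good {n m : ℕ} (hm : 1 ≤ m) {Δ : Finset (ℕ × ℕ)} (hΔ : IsAngulation n m Δ)
    {α : ℕ × ℕ} (hαΔ : α ∈ Δ) (hsp : α.2 = α.1 + (m + 1))
    {β : ℕ × ℕ} (hβ : β ∈ Δ) :
    (β.1 ≤ α.1 ∨ α.1 + (m + 1) ≤ β.1) ∧ (β.2 ≤ α.1 ∨ α.1 + (m + 1) ≤ β.2) := by
  obtain ⟨hd, hc, -⟩ := hΔ
  obtain ⟨h1, h2, h3, h4, k, hk, hks⟩ := (mdiag_char hm β).1 (hd β hβ)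
  have hkm := le_mul' (m := m) hk
  have hnc := hc α hαΔ β hβ
  unfold Crosses at hnc
  omega

lemma no_mdiag {n m : ℕ} (hm : 1 ≤ m) (hn : n ≤ 1) (c : ℕ × ℕ) : ¬ IsMDiagonal n m c := by
  intro h
  rw [mdiag_char hm] at h
  obtain ⟨h1, h2, h3, h4, k, hk, hks⟩ := h
  have h5 := le_mul' (m := m) hk
  have h6 : n * m ≤ 1 * m := Nat.mul_le_mul hn (le_refl m)
  omega

lemma reduce_main {n m : ℕ} (hn : 2 ≤ n) (hm : 1 ≤ m)
    {Δ : Finset (ℕ × ℕ)} (hΔ : IsAngulation n m Δ)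
    {α : ℕ × ℕ} (hα : CloseToBorder n m Δ α) :
    IsAngulation (n - 1) m (reduceAt m Δ α) ∧ (reduceAt m Δ α).card + 1 = Δ.card := by
  have h1n : n - 1 + 1 = n := by omega
  have hnm : (n - 1) * m + m = n * m := by
    calc (n-1)*m + m = (n-1+1)*m := by rw [Nat.add_mul, one_mul]
      _ = n*m := by rw [h1n]
  obtain ⟨hdg, hcr, hmx⟩ := hΔ
  obtain ⟨hαΔ, hcase⟩ := hα
  obtain ⟨ha1, ha2, ha3, ha4, kα, hkα, hkαs⟩ := (mdiag_char hm α).1 (hdg α hαΔ)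
  by_cases h2 : n = 2
  · subst h2
    have hsingle : ∀ β ∈ Δ, β = α := by
      intro β hβ
      obtain ⟨hb1, hb2, hb3, hb4, k, hk, hks⟩ := (mdiag_char hm β).1 (hdg β hβ)
      have hkn : k < 2 := k_lt' hm (by omega)
      have hk1 : k = 1 := by omega
      subst hk1
      have hkαn : kα < 2 := k_lt' hm (by omega)
      have hkα1 : kα = 1 := by omega
      rw [hkα1] at hkαs
      have hnc := hcr α hαΔ β hβ
      unfold Crosses at hnc
      rw [Prod.ext_iff]
      omega
    have hΔeq : Δ = {α} := Finset.eq_singleton_iff_unique_mem.2 ⟨hαΔ, hsingle⟩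
    have hE : reduceAt m Δ α = ∅ := by
      unfold reduceAt
      rw [hΔeq]
      split_ifs <;> simp
    rw [hE, hΔeq]
    refine ⟨⟨?_, ?_, ?_⟩, by simp⟩
    · intro c hc; simp at hc
    · intro a ha; simp at ha
    · intro c hc hcE
      exact absurd hc (no_mdiag hm (by omega) c)
  · -- n ≥ 3
    have h3n : 3 ≤ n := by omega
    have h3m : 3 * m ≤ n * m := Nat.mul_le_mul h3n (le_refl m)
    rcases hcase with ⟨hsp, hin⟩ | ⟨hsp, hout⟩
    · -- inner case
      rw [reduceAt, if_pos hsp]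
      have hGood : ∀ β ∈ Δ.erase α,
          (β.1 ≤ α.1 ∨ α.1+(m+1) ≤ β.1) ∧ (β.2 ≤ α.1 ∨ α.1+(m+1) ≤ β.2) := fun β hβ =>
        inner_good hm ⟨hdg, hcr, hmx⟩ hαΔ hsp (Finset.mem_of_mem_erase hβ)
      have hval : ∀ x : ℕ, (x ≤ α.1 ∨ α.1+(m+1) ≤ x) →
          (x ≤ α.1 ∧ (if α.1 < x then x - m else x) = x) ∨
          (α.1+(m+1) ≤ x ∧ (if α.1 < x then x - m else x) + m = x) := by
        intro x hx
        rcases hx with h | h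
        · exact Or.inl ⟨h, if_neg (by omega)⟩
        · refine Or.inr ⟨h, ?_⟩
          rw [if_pos (by omega)]
          omega
      refine ⟨⟨?_, ?_, ?_⟩, ?_⟩
      · intro c hc
        simp only [Finset.mem_image, Finset.mem_erase] at hc
        obtain ⟨β, ⟨hβne, hβΔ⟩, rfl⟩ := hc
        obtain ⟨hb1, hb2, hb3, hb4, k, hk, hks⟩ := (mdiag_char hm β).1 (hdg β hβΔ)
        obtain ⟨hgb1, hgb2⟩ := hGood β (Finset.mem_erase.2 ⟨hβne, hβΔ⟩)
        have e1 := hval β.1 hgb1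
        have e2 := hval β.2 hgb2
        rw [mdiag_char hm]
        dsimp only
        simp only [ne_eq, Prod.ext_iff] at hβne
        rcases hgb1 with hb | hb <;> rcases hgb2 with hb' | hb'
        · exact ⟨by omega, by omega, by omega, by omega, k, hk, by omega⟩
        · have hk2 : 2 ≤ k := by
            by_contra hc2
            have hle : k * m ≤ 1 * m := Nat.mul_le_mul (by omega) (le_refl m)
            omega
          have hkm := succ_mul' k m hk
          exact ⟨by omega, by omega, by omega, by omega, k - 1, by omega, by omega⟩
        · omega
        · exact ⟨by omega, by omega, by omega, by omega, k, hk, by omega⟩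
      · intro p hp q hq
        simp only [Finset.mem_image, Finset.mem_erase] at hp hq
        obtain ⟨β, ⟨hβne, hβΔ⟩, rfl⟩ := hp
        obtain ⟨γ, ⟨hγne, hγΔ⟩, rfl⟩ := hq
        obtain ⟨hgb1, hgb2⟩ := hGood β (Finset.mem_erase.2 ⟨hβne, hβΔ⟩)
        obtain ⟨hgc1, hgc2⟩ := hGood γ (Finset.mem_erase.2 ⟨hγne, hγΔ⟩)
        have e1 := hval β.1 hgb1
        have e2 := hval β.2 hgb2
        have e3 := hval γ.1 hgc1
        have e4 := hval γ.2 hgc2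
        have hnc := hcr β hβΔ γ hγΔ
        unfold Crosses at hnc ⊢
        dsimp only
        omega
      · intro c hc hcE
        obtain ⟨hc1, hc2, hc3, hc4, k, hk, hks⟩ := (mdiag_char hm c).1 hc
        obtain ⟨v1, hv1⟩ : ∃ v, (c.1 ≤ α.1 ∧ v = c.1) ∨ (α.1 < c.1 ∧ v = c.1 + m) := by
          rcases le_or_gt c.1 α.1 with h | h
          exacts [⟨c.1, Or.inl ⟨h, rfl⟩⟩, ⟨c.1 + m, Or.inr ⟨h, rfl⟩⟩]
        obtain ⟨v2, hv2⟩ : ∃ v, (c.2 ≤ α.1 ∧ v = c.2) ∨ (α.1 < c.2 ∧ v = c.2 + m) := by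
          rcases le_or_gt c.2 α.1 with h | h
          exacts [⟨c.2, Or.inl ⟨h, rfl⟩⟩, ⟨c.2 + m, Or.inr ⟨h, rfl⟩⟩]
        have hgv1 : v1 ≤ α.1 ∨ α.1 + (m+1) ≤ v1 := by omega
        have hgv2 : v2 ≤ α.1 ∨ α.1 + (m+1) ≤ v2 := by omega
        have hvd : IsMDiagonal n m (v1, v2) := by
          rw [mdiag_char hm]
          dsimp only
          refine ⟨by omega, by omega, by omega, by omega, ?_⟩
          rcases hv1 with ⟨h, e⟩ | ⟨h, e⟩ <;> rcases hv2 with ⟨h', e'⟩ | ⟨h', e'⟩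
          · exact ⟨k, hk, by omega⟩
          · have hs : k*m + m = (k+1)*m := by rw [Nat.add_mul, one_mul]
            exact ⟨k+1, by omega, by omega⟩
          · exact ⟨k, hk, by omega⟩
          · exact ⟨k, hk, by omega⟩
        have hvne : (v1, v2) ≠ α := by
          intro he
          rw [Prod.ext_iff] at he
          dsimp only at he
          omega
        have hvnotin : (v1, v2) ∉ Δ := by
          intro hmem
          apply hcE
          simp only [Finset.mem_image, Finset.mem_erase]
          refine ⟨(v1, v2), ⟨hvne, hmem⟩, ?_⟩
          have e1 := hval v1 hgv1
          have e2 := hval v2 hgv2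
          rw [Prod.ext_iff]
          dsimp only
          constructor <;> omega
        obtain ⟨d, hdΔ, hcd⟩ := hmx (v1, v2) hvd hvnotin
        have hdne : d ≠ α := by
          rintro rfl
          unfold Crosses at hcd
          dsimp only at hcd
          omega
        obtain ⟨hgd1, hgd2⟩ := hGood d (Finset.mem_erase.2 ⟨hdne, hdΔ⟩)
        have e1 := hval d.1 hgd1
        have e2 := hval d.2 hgd2
        refine ⟨_, Finset.mem_image_of_mem _ (Finset.mem_erase.2 ⟨hdne, hdΔ⟩), ?_⟩
        unfold Crosses at hcd ⊢
        dsimp only at hcd ⊢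
        omega
      · -- card
        have hinj : Set.InjOn
            (fun β : ℕ × ℕ => ((if α.1 < β.1 then β.1 - m else β.1),
              (if α.1 < β.2 then β.2 - m else β.2))) ↑(Δ.erase α) := by
          intro β hβ γ hγ heq
          obtain ⟨hgb1, hgb2⟩ := hGood β (Finset.mem_coe.1 hβ)
          obtain ⟨hgc1, hgc2⟩ := hGood γ (Finset.mem_coe.1 hγ)
          have e1 := hval β.1 hgb1
          have e2 := hval β.2 hgb2
          have e3 := hval γ.1 hgc1
          have e4 := hval γ.2 hgc2
          rw [Prod.ext_iff] at heq ⊢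
          dsimp only at heq
          omega
        rw [Finset.card_image_of_injOn hinj, Finset.card_erase_of_mem hαΔ]
        have : 0 < Δ.card := Finset.card_pos.2 ⟨α, hαΔ⟩
        omega
    · -- outer case
      have hif : ¬ (α.2 = α.1 + (m+1)) := by omega
      rw [reduceAt, if_neg hif]
      have hIn : ∀ β ∈ Δ.erase α, α.1 ≤ β.1 ∧ β.2 ≤ α.2 := by
        intro β hβ
        have hβΔ := Finset.mem_of_mem_erase hβ
        have hβne := Finset.ne_of_mem_erase hβ
        have hnc := hcr α hαΔ β hβΔ
        have ho := hout β hβΔ hβne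
        unfold Crosses at hnc
        unfold WeaklyOutside at ho
        omega
      refine ⟨⟨?_, ?_, ?_⟩, ?_⟩
      · intro c hc
        simp only [Finset.mem_image, Finset.mem_erase] at hc
        obtain ⟨β, ⟨hβne, hβΔ⟩, rfl⟩ := hc
        obtain ⟨hb1, hb2, hb3, hb4, k, hk, hks⟩ := (mdiag_char hm β).1 (hdg β hβΔ)
        obtain ⟨hi1, hi2⟩ := hIn β (Finset.mem_erase.2 ⟨hβne, hβΔ⟩)
        rw [mdiag_char hm]
        dsimp only
        simp only [ne_eq, Prod.ext_iff] at hβne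
        exact ⟨by omega, by omega, by omega, by omega, k, hk, by omega⟩
      · intro p hp q hq
        simp only [Finset.mem_image, Finset.mem_erase] at hp hq
        obtain ⟨β, ⟨hβne, hβΔ⟩, rfl⟩ := hp
        obtain ⟨γ, ⟨hγne, hγΔ⟩, rfl⟩ := hq
        obtain ⟨hib1, hib2⟩ := hIn β (Finset.mem_erase.2 ⟨hβne, hβΔ⟩)
        obtain ⟨hic1, hic2⟩ := hIn γ (Finset.mem_erase.2 ⟨hγne, hγΔ⟩)
        have hnc := hcr β hβΔ γ hγΔ
        unfold Crosses at hnc ⊢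
        dsimp only
        omega
      · intro c hc hcE
        obtain ⟨hc1, hc2, hc3, hc4, k, hk, hks⟩ := (mdiag_char hm c).1 hc
        have hvd : IsMDiagonal n m (c.1 + α.1 - 1, c.2 + α.1 - 1) := by
          rw [mdiag_char hm]
          dsimp only
          exact ⟨by omega, by omega, by omega, by omega, k, hk, by omega⟩
        have hvne : (c.1 + α.1 - 1, c.2 + α.1 - 1) ≠ α := by
          intro he
          rw [Prod.ext_iff] at he
          dsimp only at he
          omega
        have hvnotin : (c.1 + α.1 - 1, c.2 + α.1 - 1) ∉ Δ := by
          intro hmem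
          apply hcE
          simp only [Finset.mem_image, Finset.mem_erase]
          refine ⟨_, ⟨hvne, hmem⟩, ?_⟩
          rw [Prod.ext_iff]
          dsimp only
          constructor <;> omega
        obtain ⟨d, hdΔ, hcd⟩ := hmx _ hvd hvnotin
        have hdne : d ≠ α := by
          rintro rfl
          unfold Crosses at hcd
          dsimp only at hcd
          omega
        obtain ⟨hid1, hid2⟩ := hIn d (Finset.mem_erase.2 ⟨hdne, hdΔ⟩)
        refine ⟨_, Finset.mem_image_of_mem _ (Finset.mem_erase.2 ⟨hdne, hdΔ⟩), ?_⟩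
        unfold Crosses at hcd ⊢
        dsimp only at hcd ⊢
        omega
      · have hinj : Set.InjOn
            (fun β : ℕ × ℕ => (β.1 - α.1 + 1, β.2 - α.1 + 1)) ↑(Δ.erase α) := by
          intro β hβ γ hγ heq
          obtain ⟨hib1, hib2⟩ := hIn β (Finset.mem_coe.1 hβ)
          obtain ⟨hic1, hic2⟩ := hIn γ (Finset.mem_coe.1 hγ)
          have hbo := (hdg β (Finset.mem_of_mem_erase (Finset.mem_coe.1 hβ))).2.1
          have hco := (hdg γ (Finset.mem_of_mem_erase (Finset.mem_coe.1 hγ))).2.1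
          rw [Prod.ext_iff] at heq ⊢
          dsimp only at heq
          omega
        rw [Finset.card_image_of_injOn hinj, Finset.card_erase_of_mem hαΔ]
        have : 0 < Δ.card := Finset.card_pos.2 ⟨α, hαΔ⟩
        omega

lemma exists_close {n m : ℕ} (hn : 2 ≤ n) (hm : 1 ≤ m) {Δ : Finset (ℕ × ℕ)}
    (hΔ : IsAngulation n m Δ) : ∃ α, CloseToBorder n m Δ α := by
  obtain ⟨hdg, hcr, hmx⟩ := hΔ
  have h2m : 2 * m ≤ n * m := Nat.mul_le_mul hn (le_refl m)
  have hd0 : IsMDiagonal n m (1, m + 2) := by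
    rw [mdiag_char hm]
    dsimp only
    exact ⟨le_refl 1, by omega, by omega, by omega, 1, le_refl 1, by omega⟩
  have hΔne : Δ.Nonempty := by
    rcases Finset.eq_empty_or_nonempty Δ with h | h
    · subst h
      obtain ⟨d, hd, -⟩ := hmx _ hd0 (by simp)
      exact absurd hd (by simp)
    · exact h
  obtain ⟨α, hαΔ, hmin⟩ := Finset.exists_min_image Δ (fun β => β.2 - β.1) hΔne
  obtain ⟨ha1, ha2, ha3, ha4, kα, hkα, hkαs⟩ := (mdiag_char hm α).1 (hdg α hαΔ)
  have hspan : α.2 - α.1 = m + 1 := by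
    by_contra hne2
    have hk2 : 2 ≤ kα := by
      by_contra h
      have hle : kα * m ≤ 1 * m := Nat.mul_le_mul (by omega) (le_refl m)
      have hge : 1 * m ≤ kα * m := Nat.mul_le_mul (by omega) (le_refl m)
      omega
    have h2k : 2 * m ≤ kα * m := Nat.mul_le_mul hk2 (le_refl m)
    have hγ : IsMDiagonal n m (α.1, α.1 + (m+1)) := by
      rw [mdiag_char hm]
      dsimp only
      exact ⟨ha1, by omega, by omega, by omega, 1, le_refl 1, by omega⟩
    have hγnotin : (α.1, α.1 + (m+1)) ∉ Δ := by
      intro hmem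
      have h' : α.2 - α.1 ≤ α.1 + (m+1) - α.1 := hmin _ hmem
      omega
    obtain ⟨d, hdΔ, hcd⟩ := hmx _ hγ hγnotin
    have hmind : α.2 - α.1 ≤ d.2 - d.1 := hmin d hdΔ
    have hncd := hcr α hαΔ d hdΔ
    obtain ⟨hd1, hd2, hd3, hd4, kd, hkd, hkds⟩ := (mdiag_char hm d).1 (hdg d hdΔ)
    unfold Crosses at hcd hncd
    dsimp only at hcd
    omega
  refine ⟨α, hαΔ, Or.inl ⟨by omega, ?_⟩⟩
  intro β hβ hβne hin
  obtain ⟨hb1, hb2, hb3, hb4, k, hk, hks⟩ := (mdiag_char hm β).1 (hdg β hβ)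
  have hkm := le_mul' (m := m) hk
  unfold WeaklyInside at hin
  simp only [ne_eq, Prod.ext_iff] at hβne
  omega

lemma card_ang {m : ℕ} (hm : 1 ≤ m) :
    ∀ n (Δ : Finset (ℕ × ℕ)), IsAngulation n m Δ → Δ.card = n - 1 := by
  intro n
  induction n using Nat.strong_induction_on with
  | _ n ih =>
    intro Δ hΔ
    rcases Nat.lt_or_ge n 2 with h | h
    · have hE : Δ = ∅ := by
        rw [Finset.eq_empty_iff_forall_notMem]
        intro c hc
        exact no_mdiag hm (by omega) c (hΔ.1 c hc)
      rw [hE]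
      simp only [Finset.card_empty]
      omega
    · obtain ⟨α, hα⟩ := exists_close h hm hΔ
      obtain ⟨h1, h2⟩ := reduce_main h hm hΔ hα
      have := ih (n-1) (by omega) _ h1
      omega

/-- Removing from an `(m+2)`-angulation `Δ` of the `(nm+2)`-gon a diagonal `α`
close to the border yields an `(m+2)`-angulation of the `((n-1)m+2)`-gon with
`n-2` diagonals. -/
theorem reduceAt_isAngulation (n m : ℕ) (hn : 2 ≤ n) (hm : 1 ≤ m)
    (Δ : Finset (ℕ × ℕ)) (hΔ : IsAngulation n m Δ)
    (α : ℕ × ℕ) (hα : CloseToBorder n m Δ α) :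
    IsAngulation (n - 1) m (reduceAt m Δ α) ∧ (reduceAt m Δ α).card = n - 2 := by
  obtain ⟨h1, h2⟩ := reduce_main hn hm hΔ hα
  have h3 := card_ang hm n Δ hΔ
  exact ⟨h1, by omega⟩
end
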